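/- arXiv:1701.03341 — 2 statements merged into one kernel-verified Lean document; each statement's English description precedes it below -/
import Mathlib

section
/- Let (ψ₁,c₁) and (ψ₂,c₂) be solutions of the differential system (D) with c₁ ≥ c₂, and set θ := ψ₁ − ψ₂. Then for every s₀ ∈ ℝ with θ(s₀) = 0 one also has θ'(s₀) = 0 and θ''(s₀) = 0. -/
open MeasureTheory Filter Set Topology

namespace Stmt16Aux

variable {N : ℝ → ℝ}

lemma Ncont (hN : ∀ s, N s = Real.exp (-(s ^ 2) / 2) / Real.sqrt (2 * Real.pi)) :
    Continuous N := by
  have h : N = fun s => Real.exp (-(s ^ 2) / 2) / Real.sqrt (2 * Real.pi) := funext hN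
  rw [h]; fun_prop

lemma Npos (hN : ∀ s, N s = Real.exp (-(s ^ 2) / 2) / Real.sqrt (2 * Real.pi)) :
    ∀ s, 0 < N s := by
  intro s; rw [hN]
  exact div_pos (Real.exp_pos _) (Real.sqrt_pos.2 (by positivity))

lemma Nint (hN : ∀ s, N s = Real.exp (-(s ^ 2) / 2) / Real.sqrt (2 * Real.pi)) :
    Integrable N := by
  have h : N = fun s => (Real.sqrt (2 * Real.pi))⁻¹ * Real.exp (-(2⁻¹ : ℝ) * s ^ 2) := by
    funext s; rw [hN, div_eq_inv_mul]
    ring_nf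
  rw [h]
  exact (integrable_exp_neg_mul_sq (by norm_num)).const_mul _

/-- The antiderivative of `N` based at `0`. -/
noncomputable def Rf (N : ℝ → ℝ) (x : ℝ) : ℝ := ∫ t in (0:ℝ)..x, N t

lemma Rf_hasDerivAt (hNc : Continuous N) (hNi : Integrable N) (x : ℝ) :
    HasDerivAt (Rf N) (N x) x :=
  intervalIntegral.integral_hasDerivAt_right (hNi.intervalIntegrable)
    (hNc.stronglyMeasurableAtFilter _ _) hNc.continuousAt

lemma Rf_strictMono (hNc : Continuous N) (hNi : Integrable N) (hNpos : ∀ s, 0 < N s) :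
    StrictMono (Rf N) :=
  strictMono_of_deriv_pos fun x => by
    rw [(Rf_hasDerivAt hNc hNi x).deriv]; exact hNpos x

lemma Rf_tendsto (hNi : Integrable N) :
    Tendsto (Rf N) atTop (𝓝 (∫ t in Ioi (0:ℝ), N t)) :=
  intervalIntegral_tendsto_integral_Ioi 0 hNi.integrableOn tendsto_id

lemma Rf_le (hNc : Continuous N) (hNi : Integrable N) (hNpos : ∀ s, 0 < N s) (x : ℝ) :
    Rf N x ≤ ∫ t in Ioi (0:ℝ), N t :=
  ((Rf_strictMono hNc hNi hNpos).monotone).ge_of_tendsto (Rf_tendsto hNi) x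

lemma Hmono {H : ℝ → ℝ} (hH : ContDiff ℝ 2 H) (hHconv : StrictConvexOn ℝ Set.univ H) :
    StrictMono (deriv H) := by
  have := hHconv.strictMonoOn_deriv (fun x _ => (hH.differentiable (by norm_num)).differentiableAt)
  exact fun x y hxy => this (mem_univ x) (mem_univ y) hxy


lemma solution_structure
    (f H N : ℝ → ℝ) (ε : ℝ) (hε : 0 < ε)
    (hH'lb : ∀ x, ε < deriv H x)
    (hfpos : ∀ x ∈ Icc (0:ℝ) 1, 0 < f x)
    (hNpos : ∀ s, 0 < N s)
    (ψ ψ' ψ'' : ℝ → ℝ) (c : ℝ)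
    (hd : ∀ s, HasDerivAt ψ (ψ' s) s)
    (hd' : ∀ s, HasDerivAt ψ' (ψ'' s) s)
    (hcont : Continuous ψ'')
    (heq : ∀ s, f (ψ' s) * ψ'' s * deriv H (s * ψ' s - ψ s) = c * N s)
    (hbot : Tendsto ψ' atBot (𝓝 0)) (htop : Tendsto ψ' atTop (𝓝 1)) :
    0 < c ∧ (∀ s, 0 < ψ'' s) ∧ ∀ s, ψ' s ∈ Ioo (0:ℝ) 1 := by
  have hψ'c : Continuous ψ' := continuous_iff_continuousAt.2 fun s => (hd' s).continuousAt
  have hH'pos : ∀ x, 0 < deriv H x := fun x => hε.trans (hH'lb x)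
  -- c ≠ 0
  have hc0 : c ≠ 0 := by
    intro h0
    have key : ∀ s, ψ' s ∈ Ioo (0:ℝ) 1 → ψ'' s = 0 := by
      intro s hs
      have e := heq s
      rw [h0, zero_mul] at e
      have hf := (hfpos (ψ' s) (Ioo_subset_Icc_self hs)).ne'
      have hH' := (hH'pos (s * ψ' s - ψ s)).ne'
      rcases mul_eq_zero.1 e with h | h
      · rcases mul_eq_zero.1 h with h' | h'
        · exact absurd h' hf
        · exact h'
      · exact absurd h hH'
    obtain ⟨s₀, hs₀⟩ : ∃ s, ψ' s = 1/2 := by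
      obtain ⟨a, ha⟩ := (hbot.eventually_lt_const (by norm_num : (0:ℝ) < 1/2)).exists
      obtain ⟨b, hb⟩ := (htop.eventually_const_lt (by norm_num : (1/2:ℝ) < 1)).exists
      rcases le_total a b with hab | hab
      · obtain ⟨s, _, hs⟩ := intermediate_value_Icc hab hψ'c.continuousOn ⟨ha.le, hb.le⟩
        exact ⟨s, hs⟩
      · obtain ⟨s, _, hs⟩ := intermediate_value_Icc' hab hψ'c.continuousOn ⟨ha.le, hb.le⟩
        exact ⟨s, hs⟩
    have hclosed : IsClosed {s : ℝ | ψ' s = 1/2} := isClosed_eq hψ'c continuous_const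
    have hopen : IsOpen {s : ℝ | ψ' s = 1/2} := by
      rw [Metric.isOpen_iff]
      intro s hs
      have hsIoo : ψ' s ∈ Ioo (0:ℝ) 1 := by rw [mem_setOf_eq] at hs; rw [hs]; norm_num
      have hU : IsOpen (ψ' ⁻¹' Ioo (0:ℝ) 1) := isOpen_Ioo.preimage hψ'c
      obtain ⟨δ, hδ, hball⟩ := Metric.isOpen_iff.1 hU s hsIoo
      refine ⟨δ, hδ, fun t ht => ?_⟩
      have hconst : ∀ x y, x ∈ Metric.ball s δ → y ∈ Metric.ball s δ → x < y → ψ' x = ψ' y := by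
        intro x y hx hy hxy
        obtain ⟨ξ, hξ, hξ'⟩ := exists_hasDerivAt_eq_slope ψ' ψ'' hxy hψ'c.continuousOn
          (fun z _ => hd' z)
        have hξball : ξ ∈ Metric.ball s δ := by
          rw [Real.ball_eq_Ioo] at hx hy ⊢
          exact ⟨lt_of_lt_of_le hx.1 hξ.1.le, lt_of_le_of_lt hξ.2.le hy.2⟩
        have h0 : ψ'' ξ = 0 := key ξ (hball hξball)
        rw [h0] at hξ'
        have h1 := hξ'.symm
        rw [div_eq_zero_iff] at h1
        rcases h1 with h | h
        · linarith [sub_eq_zero.1 h]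
        · exfalso; linarith [sub_eq_zero.1 h]
      rcases lt_trichotomy t s with h | h | h
      · exact (hconst t s ht (Metric.mem_ball_self hδ) h).trans hs
      · rw [mem_setOf_eq, h]; exact hs
      · rw [mem_setOf_eq, ← hconst s t (Metric.mem_ball_self hδ) ht h]; exact hs
    have huniv : {s : ℝ | ψ' s = 1/2} = univ :=
      IsClopen.eq_univ ⟨hclosed, hopen⟩ ⟨s₀, hs₀⟩
    have hcst : Tendsto ψ' atTop (𝓝 (1/2)) := by
      have h : ψ' = fun _ => (1/2 : ℝ) :=
        funext fun s => (huniv ▸ mem_univ s : s ∈ {s : ℝ | ψ' s = 1/2})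
      rw [h]; exact tendsto_const_nhds
    have := tendsto_nhds_unique hcst htop
    norm_num at this
  -- ψ'' never vanishes
  have hne : ∀ s, ψ'' s ≠ 0 := by
    intro s h0
    have e := heq s
    rw [h0, mul_zero, zero_mul] at e
    rcases mul_eq_zero.1 e.symm with h | h
    · exact hc0 h
    · exact (hNpos s).ne' h
  -- ψ'' is everywhere positive
  have hsign : ∀ s, 0 < ψ'' s := by
    by_contra hns
    push_neg at hns
    obtain ⟨s₁, hs₁⟩ := hns
    have hs₁' : ψ'' s₁ < 0 := lt_of_le_of_ne hs₁ (hne s₁)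
    have hall : ∀ s, ψ'' s < 0 := by
      intro s
      rcases lt_or_ge (ψ'' s) 0 with h | h
      · exact h
      exfalso
      have hpos : 0 < ψ'' s := lt_of_le_of_ne h (Ne.symm (hne s))
      rcases le_total s₁ s with hle | hle
      · obtain ⟨z, _, hz⟩ := intermediate_value_Icc hle hcont.continuousOn ⟨hs₁'.le, hpos.le⟩
        exact hne z hz
      · obtain ⟨z, _, hz⟩ := intermediate_value_Icc' hle hcont.continuousOn ⟨hs₁'.le, hpos.le⟩
        exact hne z hz
    have hanti : StrictAnti ψ' :=
      strictAnti_of_deriv_neg fun x => by rw [(hd' x).deriv]; exact hall x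
    have h1 : ψ' 0 ≤ 0 :=
      ge_of_tendsto hbot (eventually_atBot.2 ⟨0, fun t ht => hanti.antitone ht⟩)
    have h2 : 1 ≤ ψ' 0 :=
      le_of_tendsto htop (eventually_atTop.2 ⟨0, fun t ht => hanti.antitone ht⟩)
    linarith
  have hmono : StrictMono ψ' :=
    strictMono_of_deriv_pos fun x => by rw [(hd' x).deriv]; exact hsign x
  have hrange : ∀ s, ψ' s ∈ Ioo (0:ℝ) 1 := by
    intro s
    have h1 : 0 ≤ ψ' (s - 1) :=
      le_of_tendsto hbot (eventually_atBot.2 ⟨s - 1, fun t ht => hmono.monotone ht⟩)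
    have h2 : ψ' (s + 1) ≤ 1 :=
      ge_of_tendsto htop (eventually_atTop.2 ⟨s + 1, fun t ht => hmono.monotone ht⟩)
    exact ⟨lt_of_le_of_lt h1 (hmono (by linarith)), lt_of_lt_of_le (hmono (by linarith)) h2⟩
  refine ⟨?_, hsign, hrange⟩
  have e := heq 0
  have hpos : 0 < f (ψ' 0) * ψ'' 0 * deriv H (0 * ψ' 0 - ψ 0) :=
    mul_pos (mul_pos (hfpos _ (Ioo_subset_Icc_self (hrange 0))) (hsign 0)) (hH'pos _)
  rw [e] at hpos
  rcases mul_pos_iff.1 hpos with ⟨h, _⟩ | ⟨_, h⟩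
  · exact h
  · exfalso; linarith [hNpos 0]


variable {g : ℝ → ℝ}

lemma surj_Ioo (hm : StrictMono g) (hc : Continuous g)
    (hbot : Tendsto g atBot (𝓝 0)) (htop : Tendsto g atTop (𝓝 1))
    {v : ℝ} (hv : v ∈ Ioo (0:ℝ) 1) : ∃ s, g s = v := by
  obtain ⟨a, ha⟩ := (hbot.eventually_lt_const hv.1).exists
  obtain ⟨b, hb⟩ := (htop.eventually_const_lt hv.2).exists
  have hab : a ≤ b := (hm.lt_iff_lt.1 (ha.trans hb)).le
  obtain ⟨s, _, hs⟩ := intermediate_value_Icc hab hc.continuousOn ⟨ha.le, hb.le⟩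
  exact ⟨s, hs⟩

lemma inv_spec (hm : StrictMono g) (hc : Continuous g)
    (hbot : Tendsto g atBot (𝓝 0)) (htop : Tendsto g atTop (𝓝 1))
    {v : ℝ} (hv : v ∈ Ioo (0:ℝ) 1) : g (Function.invFun g v) = v :=
  Function.invFun_eq (surj_Ioo hm hc hbot htop hv)

lemma inv_g (hm : StrictMono g) (s : ℝ) : Function.invFun g (g s) = s :=
  Function.leftInverse_invFun hm.injective s

lemma inv_continuousAt (hm : StrictMono g) (hc : Continuous g)
    (hbot : Tendsto g atBot (𝓝 0)) (htop : Tendsto g atTop (𝓝 1))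
    (hrange : ∀ s, g s ∈ Ioo (0:ℝ) 1)
    {v : ℝ} (hv : v ∈ Ioo (0:ℝ) 1) : ContinuousAt (Function.invFun g) v := by
  have hgs₀ : g (Function.invFun g v) = v := inv_spec hm hc hbot htop hv
  rw [ContinuousAt]
  refine tendsto_order.2 ⟨?_, ?_⟩
  · intro a ha
    have h1 : g a < v := by rw [← hgs₀]; exact hm ha
    filter_upwards [Ioo_mem_nhds h1 hv.2] with y hy
    have hy' : y ∈ Ioo (0:ℝ) 1 := ⟨(hrange a).1.trans hy.1, hy.2⟩
    have hspec := inv_spec hm hc hbot htop hy'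
    exact hm.lt_iff_lt.1 (by rw [hspec]; exact hy.1)
  · intro a ha
    have h1 : v < g a := by rw [← hgs₀]; exact hm ha
    filter_upwards [Ioo_mem_nhds hv.1 h1] with y hy
    have hy' : y ∈ Ioo (0:ℝ) 1 := ⟨hy.1, hy.2.trans (hrange a).2⟩
    have hspec := inv_spec hm hc hbot htop hy'
    exact hm.lt_iff_lt.1 (by rw [hspec]; exact hy.2)

lemma inv_hasDerivAt (hm : StrictMono g) (hc : Continuous g)
    (hbot : Tendsto g atBot (𝓝 0)) (htop : Tendsto g atTop (𝓝 1))
    (hrange : ∀ s, g s ∈ Ioo (0:ℝ) 1)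
    {g'' : ℝ → ℝ} (hd' : ∀ s, HasDerivAt g (g'' s) s) (hpos : ∀ s, 0 < g'' s)
    {v : ℝ} (hv : v ∈ Ioo (0:ℝ) 1) :
    HasDerivAt (Function.invFun g) (g'' (Function.invFun g v))⁻¹ v := by
  refine HasDerivAt.of_local_left_inverse (inv_continuousAt hm hc hbot htop hrange hv)
    (hd' _) (ne_of_gt (hpos _)) ?_
  filter_upwards [Ioo_mem_nhds hv.1 hv.2] with y hy
  exact inv_spec hm hc hbot htop hy

lemma inv_tendsto_atTop (hm : StrictMono g) (hc : Continuous g)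
    (hbot : Tendsto g atBot (𝓝 0)) (htop : Tendsto g atTop (𝓝 1))
    (hrange : ∀ s, g s ∈ Ioo (0:ℝ) 1) :
    Tendsto (Function.invFun g) (𝓝[<] (1:ℝ)) atTop := by
  rw [tendsto_atTop]
  intro M
  have h1 : g M < 1 := (hrange M).2
  filter_upwards [Ioo_mem_nhdsLT_of_mem (⟨h1, le_refl 1⟩ : (1:ℝ) ∈ Ioc (g M) 1)] with y hy
  have hy' : y ∈ Ioo (0:ℝ) 1 := ⟨(hrange M).1.trans hy.1, hy.2⟩
  have hspec := inv_spec hm hc hbot htop hy'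
  exact (hm.lt_iff_lt.1 (by rw [hspec]; exact hy.1)).le


lemma core
    (f H N : ℝ → ℝ) (ε : ℝ) (hε : 0 < ε)
    (hH'mono : StrictMono (deriv H))
    (hH'lb : ∀ x, ε < deriv H x)
    (hfpos : ∀ x ∈ Icc (0:ℝ) 1, 0 < f x)
    (hNpos : ∀ s, 0 < N s) (hNc : Continuous N) (hNi : Integrable N)
    (ψ₁ ψ₁' ψ₁'' ψ₂ ψ₂' ψ₂'' : ℝ → ℝ) (c₁ c₂ : ℝ)
    (hd₁ : ∀ s, HasDerivAt ψ₁ (ψ₁' s) s) (hd₁' : ∀ s, HasDerivAt ψ₁' (ψ₁'' s) s)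
    (hd₂ : ∀ s, HasDerivAt ψ₂ (ψ₂' s) s) (hd₂' : ∀ s, HasDerivAt ψ₂' (ψ₂'' s) s)
    (heq₁ : ∀ s, f (ψ₁' s) * ψ₁'' s * deriv H (s * ψ₁' s - ψ₁ s) = c₁ * N s)
    (heq₂ : ∀ s, f (ψ₂' s) * ψ₂'' s * deriv H (s * ψ₂' s - ψ₂ s) = c₂ * N s)
    (hbot₁ : Tendsto ψ₁' atBot (𝓝 0)) (htop₁ : Tendsto ψ₁' atTop (𝓝 1))
    (hbot₂ : Tendsto ψ₂' atBot (𝓝 0)) (htop₂ : Tendsto ψ₂' atTop (𝓝 1))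
    (hc₂pos : 0 < c₂) (hc : c₂ ≤ c₁)
    (hpp₁ : ∀ s, 0 < ψ₁'' s) (hr₁ : ∀ s, ψ₁' s ∈ Ioo (0:ℝ) 1)
    (hpp₂ : ∀ s, 0 < ψ₂'' s) (hr₂ : ∀ s, ψ₂' s ∈ Ioo (0:ℝ) 1)
    (a b w : ℝ) (hw : w ∈ Ioo (0:ℝ) 1)
    (ha : ψ₁' a = w) (hb : ψ₂' b = w) (hab : a < b)
    (hU : a * w - ψ₁ a < b * w - ψ₂ b) : False := by
  have hm₁ : StrictMono ψ₁' :=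
    strictMono_of_deriv_pos fun x => by rw [(hd₁' x).deriv]; exact hpp₁ x
  have hm₂ : StrictMono ψ₂' :=
    strictMono_of_deriv_pos fun x => by rw [(hd₂' x).deriv]; exact hpp₂ x
  have hc₁' : Continuous ψ₁' := continuous_iff_continuousAt.2 fun s => (hd₁' s).continuousAt
  have hc₂' : Continuous ψ₂' := continuous_iff_continuousAt.2 fun s => (hd₂' s).continuousAt
  set i₁ := Function.invFun ψ₁' with hi₁def
  set i₂ := Function.invFun ψ₂' with hi₂def
  have spec₁ : ∀ {v : ℝ}, v ∈ Ioo (0:ℝ) 1 → ψ₁' (i₁ v) = v :=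
    fun hv => inv_spec hm₁ hc₁' hbot₁ htop₁ hv
  have spec₂ : ∀ {v : ℝ}, v ∈ Ioo (0:ℝ) 1 → ψ₂' (i₂ v) = v :=
    fun hv => inv_spec hm₂ hc₂' hbot₂ htop₂ hv
  have hdi₁ : ∀ {v : ℝ}, v ∈ Ioo (0:ℝ) 1 → HasDerivAt i₁ (ψ₁'' (i₁ v))⁻¹ v :=
    fun hv => inv_hasDerivAt hm₁ hc₁' hbot₁ htop₁ hr₁ hd₁' hpp₁ hv
  have hdi₂ : ∀ {v : ℝ}, v ∈ Ioo (0:ℝ) 1 → HasDerivAt i₂ (ψ₂'' (i₂ v))⁻¹ v :=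
    fun hv => inv_hasDerivAt hm₂ hc₂' hbot₂ htop₂ hr₂ hd₂' hpp₂ hv
  have hia : i₁ w = a := by rw [← ha]; exact inv_g hm₁ a
  have hib : i₂ w = b := by rw [← hb]; exact inv_g hm₂ b
  set U₁ : ℝ → ℝ := fun v => i₁ v * v - ψ₁ (i₁ v) with hU₁def
  set U₂ : ℝ → ℝ := fun v => i₂ v * v - ψ₂ (i₂ v) with hU₂def
  have hdU₁ : ∀ {v : ℝ}, v ∈ Ioo (0:ℝ) 1 → HasDerivAt U₁ (i₁ v) v := by
    intro v hv
    have h1 := hdi₁ hv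
    have h2 : HasDerivAt (fun y => i₁ y * y) ((ψ₁'' (i₁ v))⁻¹ * v + i₁ v * 1) v :=
      h1.mul (hasDerivAt_id v)
    have h3 : HasDerivAt (fun y => ψ₁ (i₁ y)) (ψ₁' (i₁ v) * (ψ₁'' (i₁ v))⁻¹) v :=
      (hd₁ (i₁ v)).comp v h1
    have h4 := h2.sub h3
    have h5 : (ψ₁'' (i₁ v))⁻¹ * v + i₁ v * 1 - ψ₁' (i₁ v) * (ψ₁'' (i₁ v))⁻¹ = i₁ v := by
      rw [spec₁ hv]; ring
    rw [h5] at h4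
    exact h4
  have hdU₂ : ∀ {v : ℝ}, v ∈ Ioo (0:ℝ) 1 → HasDerivAt U₂ (i₂ v) v := by
    intro v hv
    have h1 := hdi₂ hv
    have h2 : HasDerivAt (fun y => i₂ y * y) ((ψ₂'' (i₂ v))⁻¹ * v + i₂ v * 1) v :=
      h1.mul (hasDerivAt_id v)
    have h3 : HasDerivAt (fun y => ψ₂ (i₂ y)) (ψ₂' (i₂ v) * (ψ₂'' (i₂ v))⁻¹) v :=
      (hd₂ (i₂ v)).comp v h1
    have h4 := h2.sub h3
    have h5 : (ψ₂'' (i₂ v))⁻¹ * v + i₂ v * 1 - ψ₂' (i₂ v) * (ψ₂'' (i₂ v))⁻¹ = i₂ v := by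
      rw [spec₂ hv]; ring
    rw [h5] at h4
    exact h4
  have key₁ : ∀ {v : ℝ}, v ∈ Ioo (0:ℝ) 1 →
      c₁ * (N (i₁ v) * (ψ₁'' (i₁ v))⁻¹) = f v * deriv H (U₁ v) := by
    intro v hv
    have e := heq₁ (i₁ v)
    rw [spec₁ hv] at e
    have hne := (hpp₁ (i₁ v)).ne'
    have hUv : U₁ v = i₁ v * v - ψ₁ (i₁ v) := rfl
    rw [hUv]
    field_simp
    linear_combination -e
  have key₂ : ∀ {v : ℝ}, v ∈ Ioo (0:ℝ) 1 →
      c₂ * (N (i₂ v) * (ψ₂'' (i₂ v))⁻¹) = f v * deriv H (U₂ v) := by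
    intro v hv
    have e := heq₂ (i₂ v)
    rw [spec₂ hv] at e
    have hne := (hpp₂ (i₂ v)).ne'
    have hUv : U₂ v = i₂ v * v - ψ₂ (i₂ v) := rfl
    rw [hUv]
    field_simp
    linear_combination -e
  set φ : ℝ → ℝ := fun v => c₁ * Rf N (i₁ v) - c₂ * Rf N (i₂ v) with hφdef
  have hdφ : ∀ {v : ℝ}, v ∈ Ioo (0:ℝ) 1 →
      HasDerivAt φ (f v * (deriv H (U₁ v) - deriv H (U₂ v))) v := by
    intro v hv
    have h1 : HasDerivAt (fun y => Rf N (i₁ y)) (N (i₁ v) * (ψ₁'' (i₁ v))⁻¹) v :=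
      (Rf_hasDerivAt hNc hNi (i₁ v)).comp v (hdi₁ hv)
    have h2 : HasDerivAt (fun y => Rf N (i₂ y)) (N (i₂ v) * (ψ₂'' (i₂ v))⁻¹) v :=
      (Rf_hasDerivAt hNc hNi (i₂ v)).comp v (hdi₂ hv)
    have h4 := (h1.const_mul c₁).sub (h2.const_mul c₂)
    have h5 : c₁ * (N (i₁ v) * (ψ₁'' (i₁ v))⁻¹) - c₂ * (N (i₂ v) * (ψ₂'' (i₂ v))⁻¹) =
        f v * (deriv H (U₁ v) - deriv H (U₂ v)) := by
      rw [key₁ hv, key₂ hv]; ring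
    rw [h5] at h4
    exact h4
  set Dp : ℝ → ℝ := fun v => i₁ v - i₂ v with hDpdef
  set D : ℝ → ℝ := fun v => U₁ v - U₂ v with hDdef
  have hdD : ∀ {v : ℝ}, v ∈ Ioo (0:ℝ) 1 → HasDerivAt D (Dp v) v :=
    fun hv => (hdU₁ hv).sub (hdU₂ hv)
  have hsub : Ico w 1 ⊆ Ioo (0:ℝ) 1 := fun v hv => ⟨lt_of_lt_of_le hw.1 hv.1, hv.2⟩
  have hDpw : Dp w < 0 := by
    show i₁ w - i₂ w < 0
    rw [hia, hib]; linarith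
  have hDw : D w < 0 := by
    show i₁ w * w - ψ₁ (i₁ w) - (i₂ w * w - ψ₂ (i₂ w)) < 0
    rw [hia, hib]; linarith
  -- Step 1 : Dp < 0 throughout [w, 1)
  have step1 : ∀ v ∈ Ico w 1, Dp v < 0 := by
    by_contra hcon
    push_neg at hcon
    obtain ⟨vb, hvb, hge⟩ := hcon
    have hwvb : w < vb := by
      rcases eq_or_lt_of_le hvb.1 with h | h
      · exfalso; rw [← h] at hge; linarith
      · exact h
    have hDpcont : ContinuousOn Dp (Icc w vb) := by
      intro v hv
      have hv' : v ∈ Ioo (0:ℝ) 1 := ⟨lt_of_lt_of_le hw.1 hv.1, lt_of_le_of_lt hv.2 hvb.2⟩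
      exact (((hdi₁ hv').continuousAt).sub ((hdi₂ hv').continuousAt)).continuousWithinAt
    set S := Icc w vb ∩ Dp ⁻¹' {0} with hSdef
    have hSne : S.Nonempty := by
      obtain ⟨z, hz, hz0⟩ := intermediate_value_Icc hwvb.le hDpcont ⟨hDpw.le, hge⟩
      exact ⟨z, hz, hz0⟩
    have hSclosed : IsClosed S :=
      hDpcont.preimage_isClosed_of_isClosed isClosed_Icc isClosed_singleton
    have hbdd : BddBelow S := ⟨w, fun x hx => hx.1.1⟩
    set ω := sInf S with hωdef
    have hωS : ω ∈ S := hSclosed.csInf_mem hSne hbdd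
    have hω0 : Dp ω = 0 := hωS.2
    have hωIcc : ω ∈ Icc w vb := hωS.1
    have hωgt : w < ω := lt_of_le_of_ne hωIcc.1 (by intro h; rw [← h] at hω0; linarith)
    have hneg : ∀ v ∈ Ico w ω, Dp v < 0 := by
      intro v hv
      rcases lt_trichotomy (Dp v) 0 with h | h | h
      · exact h
      · exfalso
        have hmem : v ∈ S := ⟨⟨hv.1, hv.2.le.trans hωIcc.2⟩, h⟩
        exact absurd (csInf_le hbdd hmem) (not_le.2 hv.2)
      · exfalso
        obtain ⟨z, hz, hz0⟩ := intermediate_value_Icc hv.1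
          (hDpcont.mono (Icc_subset_Icc_right (hv.2.le.trans hωIcc.2))) ⟨hDpw.le, h.le⟩
        have hmem : z ∈ S := ⟨⟨hz.1, hz.2.trans (hv.2.le.trans hωIcc.2)⟩, hz0⟩
        exact absurd (csInf_le hbdd hmem) (not_le.2 (lt_of_le_of_lt hz.2 hv.2))
    have hω01 : ω ∈ Ioo (0:ℝ) 1 := ⟨lt_of_lt_of_le hw.1 hωIcc.1, lt_of_le_of_lt hωIcc.2 hvb.2⟩
    have hDanti : AntitoneOn D (Icc w ω) := by
      apply antitoneOn_of_deriv_nonpos (convex_Icc w ω)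
      · intro z hz
        have hz' : z ∈ Ioo (0:ℝ) 1 := ⟨lt_of_lt_of_le hw.1 hz.1, lt_of_le_of_lt hz.2 hω01.2⟩
        exact (hdD hz').continuousAt.continuousWithinAt
      · intro z hz
        rw [interior_Icc] at hz
        have hz' : z ∈ Ioo (0:ℝ) 1 := ⟨lt_of_lt_of_le hw.1 hz.1.le, hz.2.trans hω01.2⟩
        exact (hdD hz').differentiableAt.differentiableWithinAt
      · intro z hz
        rw [interior_Icc] at hz
        have hz' : z ∈ Ioo (0:ℝ) 1 := ⟨lt_of_lt_of_le hw.1 hz.1.le, hz.2.trans hω01.2⟩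
        rw [(hdD hz').deriv]
        exact (hneg z ⟨hz.1.le, hz.2⟩).le
    have hDω : D ω < 0 :=
      lt_of_le_of_lt (hDanti (left_mem_Icc.2 hωgt.le) (right_mem_Icc.2 hωgt.le) hωgt.le) hDw
    set σ := i₁ ω with hσdef
    have hσ2 : i₂ ω = σ := (sub_eq_zero.1 hω0).symm
    have hψ₁σ : ψ₁' σ = ω := spec₁ hω01
    have hψ₂σ : ψ₂' σ = ω := by rw [← hσ2]; exact spec₂ hω01
    have hUlt : U₁ ω < U₂ ω := sub_neg.1 hDω
    have hH12 : deriv H (U₁ ω) < deriv H (U₂ ω) := hH'mono hUlt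
    have e₁ : f ω * ψ₁'' σ * deriv H (U₁ ω) = c₁ * N σ := by
      have e := heq₁ σ
      rw [hψ₁σ] at e
      exact e
    have e₂ : f ω * ψ₂'' σ * deriv H (U₂ ω) = c₂ * N σ := by
      have e := heq₂ σ
      rw [hψ₂σ] at e
      have hU2 : U₂ ω = σ * ω - ψ₂ σ := by
        show i₂ ω * ω - ψ₂ (i₂ ω) = σ * ω - ψ₂ σ
        rw [hσ2]
      rw [hU2]
      exact e
    have hfω : 0 < f ω := hfpos ω (Ioo_subset_Icc_self hω01)
    have hψlt : ψ₂'' σ < ψ₁'' σ := by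
      by_contra hle
      push_neg at hle
      have hH1pos : 0 < deriv H (U₁ ω) := hε.trans (hH'lb (U₁ ω))
      have h1 : f ω * ψ₁'' σ * deriv H (U₁ ω) ≤ f ω * ψ₂'' σ * deriv H (U₁ ω) :=
        mul_le_mul_of_nonneg_right (mul_le_mul_of_nonneg_left hle hfω.le) hH1pos.le
      have h2 : f ω * ψ₂'' σ * deriv H (U₁ ω) < f ω * ψ₂'' σ * deriv H (U₂ ω) :=
        mul_lt_mul_of_pos_left hH12 (mul_pos hfω (hpp₂ σ))
      have h3 : c₁ * N σ < c₂ * N σ := by rw [← e₁, ← e₂]; linarith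
      have h4 : c₁ < c₂ := lt_of_mul_lt_mul_right h3 (hNpos σ).le
      linarith
    have hinv : (ψ₁'' σ)⁻¹ < (ψ₂'' σ)⁻¹ := inv_strictAnti₀ (hpp₂ σ) hψlt
    have hdDp : HasDerivAt Dp ((ψ₁'' σ)⁻¹ - (ψ₂'' σ)⁻¹) ω := by
      have h := (hdi₁ hω01).sub (hdi₂ hω01)
      rw [hσ2] at h
      exact h
    rw [hasDerivAt_iff_tendsto_slope] at hdDp
    have hmneg : (ψ₁'' σ)⁻¹ - (ψ₂'' σ)⁻¹ < 0 := sub_neg.2 hinv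
    have hevslope : ∀ᶠ x in 𝓝[≠] ω, slope Dp ω x < 0 := hdDp.eventually_lt_const hmneg
    have hle' : 𝓝[<] ω ≤ 𝓝[≠] ω := nhdsWithin_mono ω fun x hx => ne_of_lt hx
    have hmem : Ioo w ω ∈ 𝓝[<] ω := Ioo_mem_nhdsLT_of_mem ⟨hωgt, le_refl ω⟩
    obtain ⟨v, hv1, hv2⟩ := ((hevslope.filter_mono hle').and (eventually_of_mem hmem (fun x hx => hx))).exists
    have hDpv : 0 < Dp v := by
      rw [slope_def_field, hω0, sub_zero] at hv1
      have hvω : v - ω < 0 := sub_neg.2 hv2.2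
      rcases div_neg_iff.1 hv1 with ⟨h1, h2⟩ | ⟨h1, h2⟩
      · exact h1
      · linarith
    exact absurd (hneg v ⟨hv2.1.le, hv2.2⟩) (not_lt.2 hDpv.le)
  -- Step 2 : D < 0 on [w, 1)
  have step2 : ∀ v ∈ Ico w 1, D v < 0 := by
    intro v hv
    rcases eq_or_lt_of_le hv.1 with h | h
    · rw [← h]; exact hDw
    · have hanti : AntitoneOn D (Icc w v) := by
        apply antitoneOn_of_deriv_nonpos (convex_Icc w v)
        · intro z hz
          exact (hdD (hsub ⟨hz.1, lt_of_le_of_lt hz.2 hv.2⟩)).continuousAt.continuousWithinAt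
        · intro z hz
          rw [interior_Icc] at hz
          exact (hdD (hsub ⟨hz.1.le, hz.2.trans hv.2⟩)).differentiableAt.differentiableWithinAt
        · intro z hz
          rw [interior_Icc] at hz
          rw [(hdD (hsub ⟨hz.1.le, hz.2.trans hv.2⟩)).deriv]
          exact (step1 z ⟨hz.1.le, hz.2.trans hv.2⟩).le
      exact lt_of_le_of_lt (hanti (left_mem_Icc.2 h.le) (right_mem_Icc.2 h.le) h.le) hDw
  -- Step 3 : φ is non-increasing on [w, 1)
  have step3 : ∀ v ∈ Ioo w 1, φ v ≤ φ w := by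
    intro v hv
    have hanti : AntitoneOn φ (Icc w v) := by
      apply antitoneOn_of_deriv_nonpos (convex_Icc w v)
      · intro z hz
        exact (hdφ (hsub ⟨hz.1, lt_of_le_of_lt hz.2 hv.2⟩)).continuousAt.continuousWithinAt
      · intro z hz
        rw [interior_Icc] at hz
        exact (hdφ (hsub ⟨hz.1.le, hz.2.trans hv.2⟩)).differentiableAt.differentiableWithinAt
      · intro z hz
        rw [interior_Icc] at hz
        have hz' : z ∈ Ico w 1 := ⟨hz.1.le, hz.2.trans hv.2⟩
        rw [(hdφ (hsub hz')).deriv]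
        have hD := step2 z hz'
        have hH'le : deriv H (U₁ z) ≤ deriv H (U₂ z) := (hH'mono (sub_neg.1 hD)).le
        have hf := hfpos z (Ioo_subset_Icc_self (hsub hz'))
        nlinarith
    exact hanti (left_mem_Icc.2 hv.1.le) (right_mem_Icc.2 hv.1.le) hv.1.le
  -- Step 4 : limit of φ at 1⁻ and the contradiction
  set RI := ∫ t in Ioi (0:ℝ), N t with hRIdef
  have ht₁ : Tendsto (fun v => Rf N (i₁ v)) (𝓝[<] (1:ℝ)) (𝓝 RI) :=
    intervalIntegral_tendsto_integral_Ioi 0 hNi.integrableOn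
      (inv_tendsto_atTop hm₁ hc₁' hbot₁ htop₁ hr₁)
  have ht₂ : Tendsto (fun v => Rf N (i₂ v)) (𝓝[<] (1:ℝ)) (𝓝 RI) :=
    intervalIntegral_tendsto_integral_Ioi 0 hNi.integrableOn
      (inv_tendsto_atTop hm₂ hc₂' hbot₂ htop₂ hr₂)
  have htφ : Tendsto φ (𝓝[<] (1:ℝ)) (𝓝 (c₁ * RI - c₂ * RI)) :=
    (ht₁.const_mul c₁).sub (ht₂.const_mul c₂)
  have hL : c₁ * RI - c₂ * RI ≤ φ w := by
    apply le_of_tendsto htφ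
    filter_upwards [Ioo_mem_nhdsLT_of_mem (⟨hw.2, le_refl 1⟩ : (1:ℝ) ∈ Ioc w 1)] with v hv
    exact step3 v hv
  have hφw : φ w = c₁ * Rf N a - c₂ * Rf N b := by
    show c₁ * Rf N (i₁ w) - c₂ * Rf N (i₂ w) = _
    rw [hia, hib]
  have hRab : Rf N a < Rf N b := Rf_strictMono hNc hNi hNpos hab
  have hRa : Rf N a ≤ RI := Rf_le hNc hNi hNpos a
  have h6 : (c₁ - c₂) * Rf N a ≤ (c₁ - c₂) * RI :=
    mul_le_mul_of_nonneg_left hRa (sub_nonneg.2 hc)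
  have h7 : c₂ * Rf N a < c₂ * Rf N b := mul_lt_mul_of_pos_left hRab hc₂pos
  rw [sub_mul, sub_mul] at h6
  linarith
lemma no_pos_crossing
    (f H N : ℝ → ℝ) (ε : ℝ) (hε : 0 < ε)
    (hH'mono : StrictMono (deriv H))
    (hH'lb : ∀ x, ε < deriv H x)
    (hfpos : ∀ x ∈ Icc (0:ℝ) 1, 0 < f x)
    (hNpos : ∀ s, 0 < N s) (hNc : Continuous N) (hNi : Integrable N)
    (ψ₁ ψ₁' ψ₁'' ψ₂ ψ₂' ψ₂'' : ℝ → ℝ) (c₁ c₂ : ℝ)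
    (hd₁ : ∀ s, HasDerivAt ψ₁ (ψ₁' s) s) (hd₁' : ∀ s, HasDerivAt ψ₁' (ψ₁'' s) s)
    (hd₂ : ∀ s, HasDerivAt ψ₂ (ψ₂' s) s) (hd₂' : ∀ s, HasDerivAt ψ₂' (ψ₂'' s) s)
    (heq₁ : ∀ s, f (ψ₁' s) * ψ₁'' s * deriv H (s * ψ₁' s - ψ₁ s) = c₁ * N s)
    (heq₂ : ∀ s, f (ψ₂' s) * ψ₂'' s * deriv H (s * ψ₂' s - ψ₂ s) = c₂ * N s)
    (hbot₁ : Tendsto ψ₁' atBot (𝓝 0)) (htop₁ : Tendsto ψ₁' atTop (𝓝 1))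
    (hbot₂ : Tendsto ψ₂' atBot (𝓝 0)) (htop₂ : Tendsto ψ₂' atTop (𝓝 1))
    (hc₂pos : 0 < c₂) (hc : c₂ ≤ c₁)
    (hpp₁ : ∀ s, 0 < ψ₁'' s) (hr₁ : ∀ s, ψ₁' s ∈ Ioo (0:ℝ) 1)
    (hpp₂ : ∀ s, 0 < ψ₂'' s) (hr₂ : ∀ s, ψ₂' s ∈ Ioo (0:ℝ) 1)
    (s₀ : ℝ) (h0 : ψ₁ s₀ = ψ₂ s₀) (h1 : ψ₂' s₀ < ψ₁' s₀) : False := by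
  have hm₂ : StrictMono ψ₂' :=
    strictMono_of_deriv_pos fun x => by rw [(hd₂' x).deriv]; exact hpp₂ x
  have hc₂' : Continuous ψ₂' := continuous_iff_continuousAt.2 fun s => (hd₂' s).continuousAt
  set w := ψ₁' s₀ with hwdef
  have hw : w ∈ Ioo (0:ℝ) 1 := hr₁ s₀
  obtain ⟨b, hb⟩ := surj_Ioo hm₂ hc₂' hbot₂ htop₂ hw
  have hs₀b : s₀ < b := hm₂.lt_iff_lt.1 (by rw [hb]; exact h1)
  have hcψ₂ : Continuous ψ₂ := continuous_iff_continuousAt.2 fun s => (hd₂ s).continuousAt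
  obtain ⟨ξ, hξ, hslope⟩ := exists_hasDerivAt_eq_slope ψ₂ ψ₂' hs₀b
    hcψ₂.continuousOn (fun x _ => hd₂ x)
  have hξlt : ψ₂' ξ < w := by rw [← hb]; exact hm₂ hξ.2
  rw [hslope] at hξlt
  have hMVT : ψ₂ b - ψ₂ s₀ < w * (b - s₀) := (div_lt_iff₀ (sub_pos.2 hs₀b)).1 hξlt
  have hring : w * (b - s₀) = b * w - s₀ * w := by ring
  exact core f H N ε hε hH'mono hH'lb hfpos hNpos hNc hNi ψ₁ ψ₁' ψ₁'' ψ₂ ψ₂' ψ₂'' c₁ c₂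
    hd₁ hd₁' hd₂ hd₂' heq₁ heq₂ hbot₁ htop₁ hbot₂ htop₂ hc₂pos hc hpp₁ hr₁ hpp₂ hr₂
    s₀ b w hw rfl hb hs₀b (by rw [h0]; linarith)

lemma tangency
    (f H N : ℝ → ℝ) (ε : ℝ) (hε : 0 < ε)
    (hH'mono : StrictMono (deriv H))
    (hH'lb : ∀ x, ε < deriv H x)
    (hfpos : ∀ x ∈ Icc (0:ℝ) 1, 0 < f x)
    (hNpos : ∀ s, 0 < N s) (hNc : Continuous N) (hNi : Integrable N)
    (ψ₁ ψ₁' ψ₁'' ψ₂ ψ₂' ψ₂'' : ℝ → ℝ) (c₁ c₂ : ℝ)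
    (hd₁ : ∀ s, HasDerivAt ψ₁ (ψ₁' s) s) (hd₁' : ∀ s, HasDerivAt ψ₁' (ψ₁'' s) s)
    (hd₂ : ∀ s, HasDerivAt ψ₂ (ψ₂' s) s) (hd₂' : ∀ s, HasDerivAt ψ₂' (ψ₂'' s) s)
    (heq₁ : ∀ s, f (ψ₁' s) * ψ₁'' s * deriv H (s * ψ₁' s - ψ₁ s) = c₁ * N s)
    (heq₂ : ∀ s, f (ψ₂' s) * ψ₂'' s * deriv H (s * ψ₂' s - ψ₂ s) = c₂ * N s)
    (hbot₁ : Tendsto ψ₁' atBot (𝓝 0)) (htop₁ : Tendsto ψ₁' atTop (𝓝 1))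
    (hbot₂ : Tendsto ψ₂' atBot (𝓝 0)) (htop₂ : Tendsto ψ₂' atTop (𝓝 1))
    (hc₂pos : 0 < c₂) (hc : c₂ ≤ c₁)
    (hpp₁ : ∀ s, 0 < ψ₁'' s) (hr₁ : ∀ s, ψ₁' s ∈ Ioo (0:ℝ) 1)
    (hpp₂ : ∀ s, 0 < ψ₂'' s) (hr₂ : ∀ s, ψ₂' s ∈ Ioo (0:ℝ) 1)
    (s₀ : ℝ) (h0 : ψ₁ s₀ = ψ₂ s₀) (h1 : ψ₁' s₀ = ψ₂' s₀) (hlt : c₂ < c₁) : False := by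
  have hm₂ : StrictMono ψ₂' :=
    strictMono_of_deriv_pos fun x => by rw [(hd₂' x).deriv]; exact hpp₂ x
  have hc₁' : Continuous ψ₁' := continuous_iff_continuousAt.2 fun s => (hd₁' s).continuousAt
  have hcψ₁ : Continuous ψ₁ := continuous_iff_continuousAt.2 fun s => (hd₁ s).continuousAt
  have hcψ₂ : Continuous ψ₂ := continuous_iff_continuousAt.2 fun s => (hd₂ s).continuousAt
  -- second derivatives compare at s₀
  have e₁ := heq₁ s₀
  have e₂ := heq₂ s₀
  rw [← h1, ← h0] at e₂
  have hfv : 0 < f (ψ₁' s₀) := hfpos _ (Ioo_subset_Icc_self (hr₁ s₀))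
  have hHpos : 0 < deriv H (s₀ * ψ₁' s₀ - ψ₁ s₀) := hε.trans (hH'lb _)
  have hθ'' : ψ₂'' s₀ < ψ₁'' s₀ := by
    by_contra hle
    push_neg at hle
    have hcmp : c₁ * N s₀ ≤ c₂ * N s₀ := by
      rw [← e₁, ← e₂]
      exact mul_le_mul_of_nonneg_right (mul_le_mul_of_nonneg_left hle hfv.le) hHpos.le
    nlinarith [hNpos s₀]
  -- θ' is positive just to the right of s₀
  have hdθ' : HasDerivAt (fun s => ψ₁' s - ψ₂' s) (ψ₁'' s₀ - ψ₂'' s₀) s₀ :=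
    (hd₁' s₀).sub (hd₂' s₀)
  rw [hasDerivAt_iff_tendsto_slope] at hdθ'
  have hevpos : ∀ᶠ x in 𝓝[≠] s₀, 0 < slope (fun s => ψ₁' s - ψ₂' s) s₀ x :=
    hdθ'.eventually_const_lt (sub_pos.2 hθ'')
  have h10 : ψ₁' s₀ - ψ₂' s₀ = 0 := sub_eq_zero.2 h1
  have hev2 : ∀ᶠ x in 𝓝[>] s₀, 0 < ψ₁' x - ψ₂' x := by
    have hle' : 𝓝[>] s₀ ≤ 𝓝[≠] s₀ := nhdsWithin_mono s₀ fun x hx => ne_of_gt hx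
    filter_upwards [hevpos.filter_mono hle', self_mem_nhdsWithin] with x hx hx'
    rw [slope_def_field, h10, sub_zero] at hx
    rcases div_pos_iff.1 hx with ⟨hn, _⟩ | ⟨_, hd⟩
    · exact hn
    · exfalso
      have : (0:ℝ) < x - s₀ := sub_pos.2 hx'
      linarith
  obtain ⟨u, hu, hsubset⟩ := mem_nhdsGT_iff_exists_Ioo_subset.1 hev2
  set sm := (s₀ + u) / 2 with hsmdef
  have hsm : sm ∈ Ioo s₀ u := ⟨by simp only [hsmdef]; linarith [mem_Ioi.1 hu],
    by simp only [hsmdef]; linarith [mem_Ioi.1 hu]⟩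
  have hθmono : StrictMonoOn (fun s => ψ₁ s - ψ₂ s) (Icc s₀ sm) := by
    apply strictMonoOn_of_deriv_pos (convex_Icc _ _) (hcψ₁.sub hcψ₂).continuousOn
    intro x hx
    rw [interior_Icc] at hx
    rw [((hd₁ x).sub (hd₂ x)).deriv]
    exact hsubset ⟨hx.1, hx.2.trans hsm.2⟩
  set w := ψ₂' sm with hwdef
  have hw : w ∈ Ioo (0:ℝ) 1 := hr₂ sm
  have hvw : ψ₁' s₀ < w := by rw [h1]; exact hm₂ hsm.1
  have hwlt : w < ψ₁' sm := by
    have h := hsubset hsm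
    simp only [mem_setOf_eq] at h
    linarith
  obtain ⟨aa, haa, haw⟩ := intermediate_value_Ioo hsm.1.le hc₁'.continuousOn ⟨hvw, hwlt⟩
  have hθa : 0 < ψ₁ aa - ψ₂ aa := by
    have h := hθmono (left_mem_Icc.2 hsm.1.le) ⟨haa.1.le, haa.2.le⟩ haa.1
    have h00 : ψ₁ s₀ - ψ₂ s₀ = 0 := sub_eq_zero.2 h0
    simp only at h
    linarith
  obtain ⟨ξ, hξ, hslope⟩ := exists_hasDerivAt_eq_slope ψ₂ ψ₂' haa.2
    hcψ₂.continuousOn (fun x _ => hd₂ x)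
  have hξlt : ψ₂' ξ < w := hm₂ hξ.2
  rw [hslope] at hξlt
  have hMVT : ψ₂ sm - ψ₂ aa < w * (sm - aa) := (div_lt_iff₀ (sub_pos.2 haa.2)).1 hξlt
  have hring : w * (sm - aa) = sm * w - aa * w := by ring
  exact core f H N ε hε hH'mono hH'lb hfpos hNpos hNc hNi ψ₁ ψ₁' ψ₁'' ψ₂ ψ₂' ψ₂'' c₁ c₂
    hd₁ hd₁' hd₂ hd₂' heq₁ heq₂ hbot₁ htop₁ hbot₂ htop₂ hc₂pos hc hpp₁ hr₁ hpp₂ hr₂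
    aa sm w hw haw rfl haa.2 (by linarith)
end Stmt16Aux

open Stmt16Aux

/-- If `(ψ₁,c₁)` and `(ψ₂,c₂)` solve the differential system (D)
with `c₁ ≥ c₂` and `θ := ψ₁ − ψ₂`, then any zero `s₀` of `θ` satisfies
`θ'(s₀) = 0` and `θ''(s₀) = 0`. -/
theorem stmt16 (fμ H : ℝ → ℝ) (ε K : ℝ)
    (hε : 0 < ε) (hεK : ε < K)
    (hfC1 : ContDiffOn ℝ 1 fμ (Set.Icc 0 1))
    (hfpos : ∀ x ∈ Set.Icc (0 : ℝ) 1, 0 < fμ x)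
    (hH : ContDiff ℝ 2 H)
    (hHconv : StrictConvexOn ℝ Set.univ H)
    (hH'lb : ∀ x : ℝ, ε < deriv H x) (hH'ub : ∀ x : ℝ, deriv H x < K)
    (N : ℝ → ℝ) (hN : ∀ s, N s = Real.exp (-(s ^ 2) / 2) / Real.sqrt (2 * Real.pi))
    (ψ₁ ψ₂ : ℝ → ℝ) (c₁ c₂ : ℝ)
    (hψ₁C2 : ContDiff ℝ 2 ψ₁)
    (heq₁ : ∀ s : ℝ,
      fμ (deriv ψ₁ s) * deriv (deriv ψ₁) s * deriv H (s * deriv ψ₁ s - ψ₁ s) = c₁ * N s)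
    (hbot₁ : Tendsto (deriv ψ₁) atBot (nhds 0))
    (htop₁ : Tendsto (deriv ψ₁) atTop (nhds 1))
    (hint₁ : Integrable (fun z => ψ₁ z * N z))
    (hzero₁ : (∫ z, ψ₁ z * N z) = 0)
    (hψ₂C2 : ContDiff ℝ 2 ψ₂)
    (heq₂ : ∀ s : ℝ,
      fμ (deriv ψ₂ s) * deriv (deriv ψ₂) s * deriv H (s * deriv ψ₂ s - ψ₂ s) = c₂ * N s)
    (hbot₂ : Tendsto (deriv ψ₂) atBot (nhds 0))
    (htop₂ : Tendsto (deriv ψ₂) atTop (nhds 1))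
    (hint₂ : Integrable (fun z => ψ₂ z * N z))
    (hzero₂ : (∫ z, ψ₂ z * N z) = 0)
    (hc : c₂ ≤ c₁)
    (θ : ℝ → ℝ) (hθ : θ = fun s => ψ₁ s - ψ₂ s) :
    ∀ s₀ : ℝ, θ s₀ = 0 → deriv θ s₀ = 0 ∧ deriv (deriv θ) s₀ = 0 := by
  subst hθ
  intro s₀ hθ0
  have h0 : ψ₁ s₀ = ψ₂ s₀ := sub_eq_zero.1 (by simpa using hθ0)
  -- calculus facts from C²
  have hdiff₁ : Differentiable ℝ ψ₁ := hψ₁C2.differentiable (by norm_num)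
  have hdiff₂ : Differentiable ℝ ψ₂ := hψ₂C2.differentiable (by norm_num)
  have h2₁ : ContDiff ℝ (1 + 1) ψ₁ := by norm_num; exact hψ₁C2
  have h2₂ : ContDiff ℝ (1 + 1) ψ₂ := by norm_num; exact hψ₂C2
  have hC1d₁ : ContDiff ℝ 1 (deriv ψ₁) := (contDiff_succ_iff_deriv.mp h2₁).2.2
  have hC1d₂ : ContDiff ℝ 1 (deriv ψ₂) := (contDiff_succ_iff_deriv.mp h2₂).2.2
  have hdiffd₁ : Differentiable ℝ (deriv ψ₁) := (contDiff_one_iff_deriv.mp hC1d₁).1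
  have hdiffd₂ : Differentiable ℝ (deriv ψ₂) := (contDiff_one_iff_deriv.mp hC1d₂).1
  have hcontdd₁ : Continuous (deriv (deriv ψ₁)) := (contDiff_one_iff_deriv.mp hC1d₁).2
  have hcontdd₂ : Continuous (deriv (deriv ψ₂)) := (contDiff_one_iff_deriv.mp hC1d₂).2
  have hD₁ : ∀ s, HasDerivAt ψ₁ (deriv ψ₁ s) s := fun s => (hdiff₁ s).hasDerivAt
  have hD₂ : ∀ s, HasDerivAt ψ₂ (deriv ψ₂ s) s := fun s => (hdiff₂ s).hasDerivAt
  have hD₁' : ∀ s, HasDerivAt (deriv ψ₁) (deriv (deriv ψ₁) s) s := fun s => (hdiffd₁ s).hasDerivAt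
  have hD₂' : ∀ s, HasDerivAt (deriv ψ₂) (deriv (deriv ψ₂) s) s := fun s => (hdiffd₂ s).hasDerivAt
  -- general facts
  have hNp := Npos hN
  have hNc := Ncont hN
  have hNi := Nint hN
  have hH'm := Hmono hH hHconv
  obtain ⟨hc₁pos, hpp₁, hr₁⟩ := solution_structure fμ H N ε hε hH'lb hfpos hNp
    ψ₁ (deriv ψ₁) (deriv (deriv ψ₁)) c₁ hD₁ hD₁' hcontdd₁ heq₁ hbot₁ htop₁
  obtain ⟨hc₂pos, hpp₂, hr₂⟩ := solution_structure fμ H N ε hε hH'lb hfpos hNp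
    ψ₂ (deriv ψ₂) (deriv (deriv ψ₂)) c₂ hD₂ hD₂' hcontdd₂ heq₂ hbot₂ htop₂
  -- first: θ'(s₀) = 0
  have h1 : deriv ψ₁ s₀ = deriv ψ₂ s₀ := by
    rcases lt_trichotomy (deriv ψ₂ s₀) (deriv ψ₁ s₀) with h | h | h
    · exact (no_pos_crossing fμ H N ε hε hH'm hH'lb hfpos hNp hNc hNi
        ψ₁ (deriv ψ₁) (deriv (deriv ψ₁)) ψ₂ (deriv ψ₂) (deriv (deriv ψ₂)) c₁ c₂
        hD₁ hD₁' hD₂ hD₂' heq₁ heq₂ hbot₁ htop₁ hbot₂ htop₂ hc₂pos hc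
        hpp₁ hr₁ hpp₂ hr₂ s₀ h0 h).elim
    · exact h.symm
    · -- reflect the picture
      exfalso
      have hNeven : ∀ s : ℝ, N (-s) = N s := by
        intro s; rw [hN, hN]; ring_nf
      have hgfpos : ∀ x ∈ Icc (0:ℝ) 1, 0 < fμ (1 - x) := by
        intro x hx
        obtain ⟨hx1, hx2⟩ := mem_Icc.1 hx
        exact hfpos (1 - x) (mem_Icc.2 ⟨by linarith, by linarith⟩)
      have hgd₁ : ∀ s : ℝ, HasDerivAt (fun s => ψ₁ (-s) + s) (1 - deriv ψ₁ (-s)) s := by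
        intro s
        have hcal := ((hD₁ (-s)).comp s (hasDerivAt_neg s)).add (hasDerivAt_id s)
        have he : deriv ψ₁ (-s) * (-1) + 1 = 1 - deriv ψ₁ (-s) := by ring
        rw [he] at hcal
        exact hcal
      have hgd₂ : ∀ s : ℝ, HasDerivAt (fun s => ψ₂ (-s) + s) (1 - deriv ψ₂ (-s)) s := by
        intro s
        have hcal := ((hD₂ (-s)).comp s (hasDerivAt_neg s)).add (hasDerivAt_id s)
        have he : deriv ψ₂ (-s) * (-1) + 1 = 1 - deriv ψ₂ (-s) := by ring
        rw [he] at hcal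
        exact hcal
      have hgd₁' : ∀ s : ℝ, HasDerivAt (fun s => 1 - deriv ψ₁ (-s)) (deriv (deriv ψ₁) (-s)) s := by
        intro s
        have hcal := HasDerivAt.const_sub 1 ((hD₁' (-s)).comp s (hasDerivAt_neg s))
        have he : -(deriv (deriv ψ₁) (-s) * (-1)) = deriv (deriv ψ₁) (-s) := by ring
        rw [he] at hcal
        exact hcal
      have hgd₂' : ∀ s : ℝ, HasDerivAt (fun s => 1 - deriv ψ₂ (-s)) (deriv (deriv ψ₂) (-s)) s := by
        intro s
        have hcal := HasDerivAt.const_sub 1 ((hD₂' (-s)).comp s (hasDerivAt_neg s))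
        have he : -(deriv (deriv ψ₂) (-s) * (-1)) = deriv (deriv ψ₂) (-s) := by ring
        rw [he] at hcal
        exact hcal
      have hgeq₁ : ∀ s : ℝ, fμ (1 - (1 - deriv ψ₁ (-s))) * deriv (deriv ψ₁) (-s) *
          deriv H (s * (1 - deriv ψ₁ (-s)) - (ψ₁ (-s) + s)) = c₁ * N s := by
        intro s
        have harg : s * (1 - deriv ψ₁ (-s)) - (ψ₁ (-s) + s) =
            (-s) * deriv ψ₁ (-s) - ψ₁ (-s) := by ring
        have hval : (1:ℝ) - (1 - deriv ψ₁ (-s)) = deriv ψ₁ (-s) := by ring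
        rw [harg, hval, ← hNeven s]
        exact heq₁ (-s)
      have hgeq₂ : ∀ s : ℝ, fμ (1 - (1 - deriv ψ₂ (-s))) * deriv (deriv ψ₂) (-s) *
          deriv H (s * (1 - deriv ψ₂ (-s)) - (ψ₂ (-s) + s)) = c₂ * N s := by
        intro s
        have harg : s * (1 - deriv ψ₂ (-s)) - (ψ₂ (-s) + s) =
            (-s) * deriv ψ₂ (-s) - ψ₂ (-s) := by ring
        have hval : (1:ℝ) - (1 - deriv ψ₂ (-s)) = deriv ψ₂ (-s) := by ring
        rw [harg, hval, ← hNeven s]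
        exact heq₂ (-s)
      have hgbot₁ : Tendsto (fun s : ℝ => 1 - deriv ψ₁ (-s)) atBot (𝓝 0) := by
        have hcmp := htop₁.comp tendsto_neg_atBot_atTop
        have h2 : Tendsto (fun s : ℝ => 1 - deriv ψ₁ (-s)) atBot (𝓝 (1 - 1)) :=
          tendsto_const_nhds.sub hcmp
        simpa using h2
      have hgtop₁ : Tendsto (fun s : ℝ => 1 - deriv ψ₁ (-s)) atTop (𝓝 1) := by
        have hcmp := hbot₁.comp tendsto_neg_atTop_atBot
        have h2 : Tendsto (fun s : ℝ => 1 - deriv ψ₁ (-s)) atTop (𝓝 (1 - 0)) :=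
          tendsto_const_nhds.sub hcmp
        simpa using h2
      have hgbot₂ : Tendsto (fun s : ℝ => 1 - deriv ψ₂ (-s)) atBot (𝓝 0) := by
        have hcmp := htop₂.comp tendsto_neg_atBot_atTop
        have h2 : Tendsto (fun s : ℝ => 1 - deriv ψ₂ (-s)) atBot (𝓝 (1 - 1)) :=
          tendsto_const_nhds.sub hcmp
        simpa using h2
      have hgtop₂ : Tendsto (fun s : ℝ => 1 - deriv ψ₂ (-s)) atTop (𝓝 1) := by
        have hcmp := hbot₂.comp tendsto_neg_atTop_atBot
        have h2 : Tendsto (fun s : ℝ => 1 - deriv ψ₂ (-s)) atTop (𝓝 (1 - 0)) :=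
          tendsto_const_nhds.sub hcmp
        simpa using h2
      have hgpp₁ : ∀ s : ℝ, 0 < deriv (deriv ψ₁) (-s) := fun s => hpp₁ (-s)
      have hgpp₂ : ∀ s : ℝ, 0 < deriv (deriv ψ₂) (-s) := fun s => hpp₂ (-s)
      have hgr₁ : ∀ s : ℝ, (1 - deriv ψ₁ (-s)) ∈ Ioo (0:ℝ) 1 := by
        intro s
        have hrr := hr₁ (-s)
        exact ⟨by linarith [hrr.2], by linarith [hrr.1]⟩
      have hgr₂ : ∀ s : ℝ, (1 - deriv ψ₂ (-s)) ∈ Ioo (0:ℝ) 1 := by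
        intro s
        have hrr := hr₂ (-s)
        exact ⟨by linarith [hrr.2], by linarith [hrr.1]⟩
      have hg0 : ψ₁ (-(-s₀)) + (-s₀) = ψ₂ (-(-s₀)) + (-s₀) := by rw [neg_neg, h0]
      have hg1 : (1 - deriv ψ₂ (-(-s₀))) < (1 - deriv ψ₁ (-(-s₀))) := by
        rw [neg_neg]; linarith
      exact no_pos_crossing (fun x => fμ (1 - x)) H N ε hε hH'm hH'lb hgfpos hNp hNc hNi
        (fun s => ψ₁ (-s) + s) (fun s => 1 - deriv ψ₁ (-s)) (fun s => deriv (deriv ψ₁) (-s))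
        (fun s => ψ₂ (-s) + s) (fun s => 1 - deriv ψ₂ (-s)) (fun s => deriv (deriv ψ₂) (-s))
        c₁ c₂ hgd₁ hgd₁' hgd₂ hgd₂' hgeq₁ hgeq₂ hgbot₁ hgtop₁ hgbot₂ hgtop₂ hc₂pos hc
        hgpp₁ hgr₁ hgpp₂ hgr₂ (-s₀) hg0 hg1
  -- second: c₁ = c₂, hence θ''(s₀) = 0
  have hceq : c₁ = c₂ := by
    refine le_antisymm (not_lt.1 fun hgt => ?_) hc
    exact tangency fμ H N ε hε hH'm hH'lb hfpos hNp hNc hNi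
      ψ₁ (deriv ψ₁) (deriv (deriv ψ₁)) ψ₂ (deriv ψ₂) (deriv (deriv ψ₂)) c₁ c₂
      hD₁ hD₁' hD₂ hD₂' heq₁ heq₂ hbot₁ htop₁ hbot₂ htop₂ hc₂pos hc
      hpp₁ hr₁ hpp₂ hr₂ s₀ h0 h1 hgt
  have hdd : deriv (deriv ψ₁) s₀ = deriv (deriv ψ₂) s₀ := by
    have e₁ := heq₁ s₀
    have e₂ := heq₂ s₀
    rw [← h1, ← h0] at e₂
    rw [hceq] at e₁
    have hHne : deriv H (s₀ * deriv ψ₁ s₀ - ψ₁ s₀) ≠ 0 :=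
      (hε.trans (hH'lb _)).ne'
    have hfne : fμ (deriv ψ₁ s₀) ≠ 0 := (hfpos _ (Ioo_subset_Icc_self (hr₁ s₀))).ne'
    have hcancel := mul_right_cancel₀ hHne (e₁.trans e₂.symm)
    exact mul_left_cancel₀ hfne hcancel
  constructor
  · have hder : deriv (fun s => ψ₁ s - ψ₂ s) s₀ = deriv ψ₁ s₀ - deriv ψ₂ s₀ :=
      ((hD₁ s₀).sub (hD₂ s₀)).deriv
    rw [hder, h1, sub_self]
  · have hfun : deriv (fun s => ψ₁ s - ψ₂ s) = fun s => deriv ψ₁ s - deriv ψ₂ s :=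
      funext fun s => ((hD₁ s).sub (hD₂ s)).deriv
    rw [hfun, (show HasDerivAt (fun s => deriv ψ₁ s - deriv ψ₂ s) _ s₀ from (hD₁' s₀).sub (hD₂' s₀)).deriv, hdd, sub_self]
end

section
/- Let (ψ₁,c₁) and (ψ₂,c₂) be solutions of the differential system (D) with c₁ ≥ c₂, set θ := ψ₁ − ψ₂, and let s₀ ∈ ℝ satisfy θ(s₀) = 0. Let b := inf{s > s₀ : θ'(s) = 0}, with the convention b = +∞ if this set is empty. If b > s₀, then θ'(s) < 0 for every s ∈ (s₀, b). -/
open MeasureTheory Filter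

open Set


lemma deriv_nonneg_of_lt_left {v : ℝ → ℝ} {d τ a y : ℝ}
    (hder : HasDerivAt v d τ) (ha : a < τ) (hvτ : v τ = y)
    (hlt : ∀ x ∈ Set.Ico a τ, v x < y) : 0 ≤ d := by
  have hslope := hasDerivAt_iff_tendsto_slope.mp hder
  have h2 : Tendsto (slope v τ) (nhdsWithin τ (Iio τ)) (nhds d) :=
    hslope.mono_left (nhdsWithin_mono _ (fun x hx => ne_of_lt hx))
  refine ge_of_tendsto h2 ?_
  filter_upwards [Ioo_mem_nhdsLT_of_mem (⟨ha, le_rfl⟩ : τ ∈ Set.Ioc a τ)] with x hx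
  have hxv := hlt x ⟨le_of_lt hx.1, hx.2⟩
  have hs : slope v τ x = (v x - y) / (x - τ) := by rw [slope_def_field, hvτ]
  rw [hs]
  exact le_of_lt (div_pos_of_neg_of_neg (by linarith [hxv, hx.2] : v x - y < 0) (by linarith [hx.2] : x - τ < 0))

lemma deriv_nonneg_of_gt_right {v : ℝ → ℝ} {d τ X y : ℝ}
    (hder : HasDerivAt v d τ) (hX : τ < X) (hvτ : v τ = y)
    (hgt : ∀ x ∈ Set.Ioc τ X, y < v x) : 0 ≤ d := by
  have hslope := hasDerivAt_iff_tendsto_slope.mp hder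
  have h2 : Tendsto (slope v τ) (nhdsWithin τ (Ioi τ)) (nhds d) :=
    hslope.mono_left (nhdsWithin_mono _ (fun x hx => ne_of_gt hx))
  refine ge_of_tendsto h2 ?_
  filter_upwards [Ioo_mem_nhdsGT_of_mem (⟨le_rfl, hX⟩ : τ ∈ Set.Ico τ X)] with x hx
  have hxv := hgt x ⟨hx.1, le_of_lt hx.2⟩
  have hs : slope v τ x = (v x - y) / (x - τ) := by rw [slope_def_field, hvτ]
  rw [hs]
  exact le_of_lt (div_pos (by linarith [hxv] : 0 < v x - y) (by linarith [hx.1] : 0 < x - τ))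

/-- first hitting time of level `y` from below -/
lemma first_hit {v : ℝ → ℝ} (hv : Continuous v) {a X y : ℝ} (haX : a ≤ X)
    (ha : v a < y) (hX : y ≤ v X) :
    ∃ τ ∈ Set.Ioc a X, v τ = y ∧ ∀ x ∈ Set.Ico a τ, v x < y := by
  set T : Set ℝ := {x | x ∈ Set.Icc a X ∧ y ≤ v x} with hT
  have hTclosed : IsClosed T := (isClosed_Icc.inter (isClosed_le continuous_const hv))
  have hTne : T.Nonempty := ⟨X, ⟨haX, le_rfl⟩, hX⟩
  have hTbdd : BddBelow T := ⟨a, fun x hx => hx.1.1⟩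
  set τ := sInf T with hτ
  have hτT : τ ∈ T := hTclosed.csInf_mem hTne hTbdd
  have hlt : ∀ x ∈ Set.Ico a τ, v x < y := by
    intro x hx
    by_contra hcon
    exact absurd (csInf_le hTbdd ⟨⟨hx.1, le_trans (le_of_lt hx.2) hτT.1.2⟩, le_of_not_gt hcon⟩)
      (not_le.mpr hx.2)
  have haτ : a < τ := by
    rcases lt_or_ge a τ with h | h
    · exact h
    · exfalso
      have : τ = a := le_antisymm h hτT.1.1
      rw [this] at hτT; linarith [hτT.2]
  have hvy : v τ = y := by
    refine le_antisymm ?_ hτT.2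
    have h2 : Tendsto v (nhdsWithin τ (Iio τ)) (nhds (v τ)) :=
      (hv.tendsto τ).mono_left nhdsWithin_le_nhds
    refine le_of_tendsto h2 ?_
    filter_upwards [Ioo_mem_nhdsLT_of_mem (⟨haτ, le_rfl⟩ : τ ∈ Set.Ioc a τ)] with x hx
    exact le_of_lt (hlt x ⟨le_of_lt hx.1, hx.2⟩)
  exact ⟨τ, ⟨haτ, hτT.1.2⟩, hvy, hlt⟩

/-- last hitting time of level `y` from above -/
lemma last_hit {v : ℝ → ℝ} (hv : Continuous v) {a X y : ℝ} (haX : a ≤ X)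
    (ha : v a ≤ y) (hX : y < v X) :
    ∃ τ ∈ Set.Ico a X, v τ = y ∧ ∀ x ∈ Set.Ioc τ X, y < v x := by
  set T : Set ℝ := {x | x ∈ Set.Icc a X ∧ v x ≤ y} with hT
  have hTclosed : IsClosed T := (isClosed_Icc.inter (isClosed_le hv continuous_const))
  have hTne : T.Nonempty := ⟨a, ⟨le_rfl, haX⟩, ha⟩
  have hTbdd : BddAbove T := ⟨X, fun x hx => hx.1.2⟩
  set τ := sSup T with hτ
  have hτT : τ ∈ T := hTclosed.csSup_mem hTne hTbdd
  have hgt : ∀ x ∈ Set.Ioc τ X, y < v x := by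
    intro x hx
    by_contra hcon
    exact absurd (le_csSup hTbdd ⟨⟨le_trans hτT.1.1 (le_of_lt hx.1), hx.2⟩, le_of_not_gt hcon⟩)
      (not_le.mpr hx.1)
  have hτX : τ < X := by
    rcases lt_or_ge τ X with h | h
    · exact h
    · exfalso
      have : τ = X := le_antisymm hτT.1.2 h
      rw [this] at hτT; linarith [hτT.2]
  have hvy : v τ = y := by
    refine le_antisymm hτT.2 ?_
    have h2 : Tendsto v (nhdsWithin τ (Ioi τ)) (nhds (v τ)) :=
      (hv.tendsto τ).mono_left nhdsWithin_le_nhds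
    refine ge_of_tendsto h2 ?_
    filter_upwards [Ioo_mem_nhdsGT_of_mem (⟨le_rfl, hτX⟩ : τ ∈ Set.Ico τ X)] with x hx
    exact le_of_lt (hgt x ⟨hx.1, le_of_lt hx.2⟩)
  exact ⟨τ, ⟨hτT.1.1, hτX⟩, hvy, hgt⟩

section
variable {fμ H N ψ v : ℝ → ℝ} {ε c : ℝ}

lemma sol_c_pos (hε : 0 < ε) (hfpos : ∀ x ∈ Icc (0:ℝ) 1, 0 < fμ x)
    (hH'lb : ∀ x, ε < deriv H x) (hNpos : ∀ s, 0 < N s)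
    (hvd : Differentiable ℝ v)
    (heq : ∀ s, fμ (v s) * deriv v s * deriv H (s * v s - ψ s) = c * N s)
    (hbot : Tendsto v atBot (nhds 0)) (htop : Tendsto v atTop (nhds 1)) : 0 < c := by
  have hvcont : Continuous v := hvd.continuous
  have hH'pos : ∀ x, (0:ℝ) < deriv H x := fun x => lt_trans hε (hH'lb x)
  rcases lt_trichotomy c 0 with hc | hc | hc
  · exfalso
    have key : ∀ x, v x ∈ Icc (0:ℝ) 1 → deriv v x < 0 := by
      intro x hx
      have h := heq x
      have hf := hfpos _ hx
      have hH := hH'pos (x * v x - ψ x)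
      have hcN : c * N x < 0 := mul_neg_of_neg_of_pos hc (hNpos x)
      nlinarith [mul_pos hf hH]
    obtain ⟨a, ha⟩ := (hbot.eventually_lt_const (show (0:ℝ) < 1/4 by norm_num)).exists
    obtain ⟨X, hX1, hX2⟩ :=
      ((htop.eventually_const_lt (show (3/4:ℝ) < 1 by norm_num)).and (eventually_ge_atTop a)).exists
    obtain ⟨τ, hτ, hvτ, hgt⟩ := last_hit hvcont hX2 (le_of_lt ha) (by linarith)
    have hd := key τ (by rw [hvτ]; norm_num)
    have := deriv_nonneg_of_gt_right (hvd τ).hasDerivAt hτ.2 hvτ hgt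
    linarith
  · exfalso
    have key0 : ∀ x, v x ∈ Icc (0:ℝ) 1 → deriv v x = 0 := by
      intro x hx
      have h := heq x
      have hf := hfpos _ hx
      have hH := hH'pos (x * v x - ψ x)
      rw [hc, zero_mul] at h
      rcases mul_eq_zero.mp h with h' | h'
      · rcases mul_eq_zero.mp h' with h'' | h''
        · exact absurd h'' (ne_of_gt hf)
        · exact h''
      · exact absurd h' (ne_of_gt hH)
    obtain ⟨a, ha⟩ := (hbot.eventually_lt_const (show (0:ℝ) < 1/2 by norm_num)).exists
    obtain ⟨X, hX1, hX2⟩ :=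
      ((htop.eventually_const_lt (show (3/4:ℝ) < 1 by norm_num)).and (eventually_ge_atTop a)).exists
    obtain ⟨s', hs'mem, hs'⟩ := intermediate_value_Icc hX2 hvcont.continuousOn
      (⟨le_of_lt ha, by linarith⟩ : (1/2:ℝ) ∈ Icc (v a) (v X))
    set T : Set ℝ := {x | x ∈ Icc s' X ∧ (v x ≤ 1/4 ∨ 3/4 ≤ v x)} with hT
    have hTclosed : IsClosed T :=
      isClosed_Icc.inter ((isClosed_le hvcont continuous_const).union
        (isClosed_le continuous_const hvcont))
    have hTne : T.Nonempty := ⟨X, ⟨hs'mem.2, le_rfl⟩, Or.inr (le_of_lt hX1)⟩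
    have hTbdd : BddBelow T := ⟨s', fun x hx => hx.1.1⟩
    set τ := sInf T with hτdef
    have hτT : τ ∈ T := hTclosed.csInf_mem hTne hTbdd
    have hwindow : ∀ x ∈ Ico s' τ, 1/4 < v x ∧ v x < 3/4 := by
      intro x hx
      by_contra hcon
      have hx' : x ∈ T := by
        refine ⟨⟨hx.1, le_trans (le_of_lt hx.2) hτT.1.2⟩, ?_⟩
        rcases not_and_or.mp hcon with h' | h'
        · exact Or.inl (le_of_not_gt h')
        · exact Or.inr (le_of_not_gt h')
      exact absurd (csInf_le hTbdd hx') (not_le.mpr hx.2)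
    have hs'τ : s' < τ := by
      rcases lt_or_ge s' τ with h | h
      · exact h
      · exfalso
        have hts : τ = s' := le_antisymm h hτT.1.1
        have h2 := hτT.2
        rw [hts, hs'] at h2
        rcases h2 with h' | h' <;> norm_num at h'
    have hder0 : ∀ x ∈ interior (Icc s' τ), deriv v x = 0 := by
      intro x hx
      rw [interior_Icc] at hx
      have hw := hwindow x ⟨le_of_lt hx.1, hx.2⟩
      exact key0 x ⟨by linarith [hw.1], by linarith [hw.2]⟩
    have hmono : MonotoneOn v (Icc s' τ) :=
      monotoneOn_of_deriv_nonneg (convex_Icc _ _) hvcont.continuousOn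
        (hvd.differentiableOn) (fun x hx => le_of_eq (hder0 x hx).symm)
    have hanti : AntitoneOn v (Icc s' τ) :=
      antitoneOn_of_deriv_nonpos (convex_Icc _ _) hvcont.continuousOn
        (hvd.differentiableOn) (fun x hx => le_of_eq (hder0 x hx))
    have h1 : v s' ≤ v τ := hmono ⟨le_rfl, le_of_lt hs'τ⟩ ⟨le_of_lt hs'τ, le_rfl⟩ (le_of_lt hs'τ)
    have h2 : v τ ≤ v s' := hanti ⟨le_rfl, le_of_lt hs'τ⟩ ⟨le_of_lt hs'τ, le_rfl⟩ (le_of_lt hs'τ)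
    have hvτ : v τ = 1/2 := by rw [← hs']; linarith
    rcases hτT.2 with h' | h' <;> rw [hvτ] at h' <;> norm_num at h'
  · exact hc

lemma sol_fμ_pos (hε : 0 < ε) (hfpos : ∀ x ∈ Icc (0:ℝ) 1, 0 < fμ x)
    (hH'lb : ∀ x, ε < deriv H x) (hNpos : ∀ s, 0 < N s)
    (hvd : Differentiable ℝ v)
    (heq : ∀ s, fμ (v s) * deriv v s * deriv H (s * v s - ψ s) = c * N s)
    (hbot : Tendsto v atBot (nhds 0)) (htop : Tendsto v atTop (nhds 1))
    (hc : 0 < c) (s : ℝ) : 0 < fμ (v s) := by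
  have hvcont : Continuous v := hvd.continuous
  have hH'pos : ∀ x, (0:ℝ) < deriv H x := fun x => lt_trans hε (hH'lb x)
  by_contra hcon
  push_neg at hcon
  have hne : fμ (v s) ≠ 0 := by
    intro h0
    have h := heq s
    rw [h0, zero_mul, zero_mul] at h
    exact absurd h.symm (ne_of_gt (mul_pos hc (hNpos s)))
  have hfneg : fμ (v s) < 0 := lt_of_le_of_ne hcon hne
  have hkey : ∀ x, v x = v s → deriv v x < 0 := by
    intro x hx
    have h := heq x
    rw [hx] at h
    have hH := hH'pos (x * v s - ψ x)
    have hcN : 0 < c * N x := mul_pos hc (hNpos x)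
    by_contra hdge
    push_neg at hdge
    have h1 : fμ (v s) * deriv v x ≤ 0 := mul_nonpos_iff.mpr (Or.inr ⟨le_of_lt hfneg, hdge⟩)
    have h2 : fμ (v s) * deriv v x * deriv H (x * v s - ψ x) ≤ 0 :=
      mul_nonpos_iff.mpr (Or.inr ⟨h1, le_of_lt hH⟩)
    linarith
  have hout : v s < 0 ∨ 1 < v s := by
    by_contra hcon2
    push_neg at hcon2
    exact absurd (hfpos (v s) ⟨hcon2.1, hcon2.2⟩) (not_lt.mpr hcon)
  rcases hout with hvs | hvs
  · obtain ⟨X, hX1, hX2⟩ :=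
      ((htop.eventually_const_lt (show (1/2:ℝ) < 1 by norm_num)).and (eventually_ge_atTop s)).exists
    obtain ⟨τ, hτ, hvτ, hgt⟩ := last_hit hvcont hX2 le_rfl (by linarith)
    have hd := hkey τ hvτ
    have := deriv_nonneg_of_gt_right (hvd τ).hasDerivAt hτ.2 hvτ hgt
    linarith
  · obtain ⟨a, ha1, ha2⟩ :=
      ((hbot.eventually_lt_const (show (0:ℝ) < 1/2 by norm_num)).and (eventually_le_atBot s)).exists
    obtain ⟨τ, hτ, hvτ, hlt⟩ := first_hit hvcont ha2 (by linarith) le_rfl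
    have hd := hkey τ hvτ
    have := deriv_nonneg_of_lt_left (hvd τ).hasDerivAt hτ.1 hvτ hlt
    linarith

lemma sol_deriv_pos (hε : 0 < ε) (hfpos : ∀ x ∈ Icc (0:ℝ) 1, 0 < fμ x)
    (hH'lb : ∀ x, ε < deriv H x) (hNpos : ∀ s, 0 < N s)
    (hvd : Differentiable ℝ v)
    (heq : ∀ s, fμ (v s) * deriv v s * deriv H (s * v s - ψ s) = c * N s)
    (hbot : Tendsto v atBot (nhds 0)) (htop : Tendsto v atTop (nhds 1))
    (hc : 0 < c) (s : ℝ) : 0 < deriv v s := by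
  have hf := sol_fμ_pos hε hfpos hH'lb hNpos hvd heq hbot htop hc s
  have h := heq s
  have hH := lt_trans hε (hH'lb (s * v s - ψ s))
  have hcN : 0 < c * N s := mul_pos hc (hNpos s)
  by_contra hd
  push_neg at hd
  have h1 : fμ (v s) * deriv v s ≤ 0 := mul_nonpos_iff.mpr (Or.inl ⟨le_of_lt hf, hd⟩)
  have h2 : fμ (v s) * deriv v s * deriv H (s * v s - ψ s) ≤ 0 :=
    mul_nonpos_iff.mpr (Or.inr ⟨h1, le_of_lt hH⟩)
  linarith

lemma sol_mem_Ioo {v : ℝ → ℝ}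
    (hmono : StrictMono v)
    (hbot : Tendsto v atBot (nhds 0)) (htop : Tendsto v atTop (nhds 1))
    (s : ℝ) : v s ∈ Ioo (0:ℝ) 1 := by
  constructor
  · have h1 : (0:ℝ) ≤ v (s - 1) := by
      refine le_of_tendsto hbot ?_
      filter_upwards [eventually_lt_atBot (s - 1)] with x hx
      exact le_of_lt (hmono hx)
    linarith [hmono (show s - 1 < s by linarith)]
  · have h1 : v (s + 1) ≤ 1 := by
      refine ge_of_tendsto htop ?_
      filter_upwards [eventually_gt_atTop (s + 1)] with x hx
      exact le_of_lt (hmono hx)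
    linarith [hmono (show s < s + 1 by linarith)]

lemma sol_surj {v : ℝ → ℝ} (hvcont : Continuous v)
    (hbot : Tendsto v atBot (nhds 0)) (htop : Tendsto v atTop (nhds 1))
    {q : ℝ} (hq : q ∈ Ioo (0:ℝ) 1) : ∃ s, v s = q := by
  obtain ⟨a, ha⟩ := (hbot.eventually_lt_const hq.1).exists
  obtain ⟨X, hX1, hX2⟩ := ((htop.eventually_const_lt hq.2).and (eventually_ge_atTop a)).exists
  obtain ⟨s, _, hs⟩ := intermediate_value_Icc hX2 hvcont.continuousOn
    (⟨le_of_lt ha, le_of_lt hX1⟩ : q ∈ Icc (v a) (v X))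
  exact ⟨s, hs⟩

lemma exists_inverse {v : ℝ → ℝ} (hmono : StrictMono v) (hcont : Continuous v)
    (hrange : ∀ s, v s ∈ Ioo (0:ℝ) 1)
    (hsurj : ∀ q ∈ Ioo (0:ℝ) 1, ∃ s, v s = q) :
    ∃ g : ℝ → ℝ, ContinuousOn g (Ioo 0 1) ∧ (∀ q ∈ Ioo (0:ℝ) 1, v (g q) = q) := by
  set v' : ℝ → Ioo (0:ℝ) 1 := fun s => ⟨v s, hrange s⟩ with hv'
  have hmono' : StrictMono v' := fun a b hab => by
    simp only [hv', Subtype.mk_lt_mk]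
    exact hmono hab
  have hsurj' : Function.Surjective v' := by
    rintro ⟨q, hq⟩
    obtain ⟨s, hs⟩ := hsurj q hq
    exact ⟨s, Subtype.ext hs⟩
  set e := StrictMono.orderIsoOfSurjective v' hmono' hsurj' with he
  haveI : OrdConnected (Ioo (0:ℝ) 1) := Set.ordConnected_Ioo
  have hcont' : Continuous (e.symm : Ioo (0:ℝ) 1 → ℝ) := OrderIso.continuous _
  refine ⟨fun q => if h : q ∈ Ioo (0:ℝ) 1 then (e.symm ⟨q, h⟩ : ℝ) else 0, ?_, ?_⟩
  · rw [continuousOn_iff_continuous_restrict]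
    have : (Ioo (0:ℝ) 1).domRestrict (fun q => if h : q ∈ Ioo (0:ℝ) 1 then (e.symm ⟨q, h⟩ : ℝ) else 0)
        = fun x : Ioo (0:ℝ) 1 => (e.symm x : ℝ) := by
      funext x
      show (if h : (x:ℝ) ∈ Ioo (0:ℝ) 1 then (e.symm ⟨x, h⟩ : ℝ) else 0) = e.symm x
      rw [dif_pos x.2]
    rw [this]
    exact hcont'
  · intro q hq
    simp only [hq, dif_pos]
    have hcoe : ⇑e = v' := StrictMono.coe_orderIsoOfSurjective _ _ _
    have h1 : v' (e.symm ⟨q, hq⟩) = ⟨q, hq⟩ := by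
      rw [← hcoe]
      exact e.apply_symm_apply _
    exact congrArg Subtype.val h1

end

lemma pack2 {F : ℝ → ℝ} (h : ContDiff ℝ 2 F) :
    Differentiable ℝ F ∧ Differentiable ℝ (deriv F) ∧ Continuous (deriv (deriv F)) := by
  have h2 : ContDiff ℝ (1 + 1 : ℕ) F := by exact_mod_cast h
  rw [show ((1 + 1 : ℕ) : WithTop ℕ∞) = ((1:WithTop ℕ∞) + 1) from by norm_cast] at h2
  obtain ⟨hd, -, h1⟩ := contDiff_succ_iff_deriv.mp h2
  exact ⟨hd, (contDiff_one_iff_deriv.mp h1).1, (contDiff_one_iff_deriv.mp h1).2⟩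


set_option maxHeartbeats 1000000

/-- If `(ψ₁,c₁)` and `(ψ₂,c₂)` solve the differential system (D)
with `c₁ ≥ c₂`, `θ := ψ₁ − ψ₂`, `θ(s₀) = 0`, and
`b := inf {s > s₀ : θ'(s) = 0}` (with `b = +∞` if this set is empty, encoded in
`EReal`), then `b > s₀` implies `θ' < 0` on `(s₀, b)`. -/
theorem stmt17 (fμ H : ℝ → ℝ) (ε K : ℝ)
    (hε : 0 < ε) (hεK : ε < K)
    (hfC1 : ContDiffOn ℝ 1 fμ (Set.Icc 0 1))
    (hfpos : ∀ x ∈ Set.Icc (0 : ℝ) 1, 0 < fμ x)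
    (hH : ContDiff ℝ 2 H)
    (hHconv : StrictConvexOn ℝ Set.univ H)
    (hH'lb : ∀ x : ℝ, ε < deriv H x) (hH'ub : ∀ x : ℝ, deriv H x < K)
    (N : ℝ → ℝ) (hN : ∀ s, N s = Real.exp (-(s ^ 2) / 2) / Real.sqrt (2 * Real.pi))
    (ψ₁ ψ₂ : ℝ → ℝ) (c₁ c₂ : ℝ)
    (hψ₁C2 : ContDiff ℝ 2 ψ₁)
    (heq₁ : ∀ s : ℝ,
      fμ (deriv ψ₁ s) * deriv (deriv ψ₁) s * deriv H (s * deriv ψ₁ s - ψ₁ s) = c₁ * N s)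
    (hbot₁ : Tendsto (deriv ψ₁) atBot (nhds 0))
    (htop₁ : Tendsto (deriv ψ₁) atTop (nhds 1))
    (hint₁ : Integrable (fun z => ψ₁ z * N z))
    (hzero₁ : (∫ z, ψ₁ z * N z) = 0)
    (hψ₂C2 : ContDiff ℝ 2 ψ₂)
    (heq₂ : ∀ s : ℝ,
      fμ (deriv ψ₂ s) * deriv (deriv ψ₂) s * deriv H (s * deriv ψ₂ s - ψ₂ s) = c₂ * N s)
    (hbot₂ : Tendsto (deriv ψ₂) atBot (nhds 0))
    (htop₂ : Tendsto (deriv ψ₂) atTop (nhds 1))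
    (hint₂ : Integrable (fun z => ψ₂ z * N z))
    (hzero₂ : (∫ z, ψ₂ z * N z) = 0)
    (hc : c₂ ≤ c₁)
    (θ : ℝ → ℝ) (hθ : θ = fun s => ψ₁ s - ψ₂ s)
    (s₀ : ℝ) (hs₀ : θ s₀ = 0)
    (b : EReal) (hb : b = sInf (Real.toEReal '' {s : ℝ | s₀ < s ∧ deriv θ s = 0}))
    (hlt : (s₀ : EReal) < b) :
    ∀ s : ℝ, s₀ < s → (s : EReal) < b → deriv θ s < 0 := by
  intro s hs₀s hsb
  -- positivity and continuity of N
  have hNpos : ∀ x, 0 < N x := by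
    intro x
    rw [hN x]
    have h1 : (0:ℝ) < Real.sqrt (2 * Real.pi) :=
      Real.sqrt_pos.mpr (by positivity)
    positivity
  have hNcont : Continuous N := by
    have hNfun : N = fun x => Real.exp (-(x ^ 2) / 2) / Real.sqrt (2 * Real.pi) := funext hN
    rw [hNfun]
    fun_prop
  have hNint : MeasureTheory.Integrable N := by
    have h0 : MeasureTheory.Integrable (fun x : ℝ => Real.exp (-(1/2 : ℝ) * x ^ 2)) :=
      integrable_exp_neg_mul_sq (by norm_num)
    refine (h0.div_const (Real.sqrt (2 * Real.pi))).congr ?_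
    refine Filter.Eventually.of_forall (fun x => ?_)
    rw [hN x]
    ring_nf
  -- smoothness packages
  obtain ⟨hψ₁d, hv₁d, hv₁'cont⟩ := pack2 hψ₁C2
  obtain ⟨hψ₂d, hv₂d, hv₂'cont⟩ := pack2 hψ₂C2
  obtain ⟨hHd, hH'd, -⟩ := pack2 hH
  have hH'cont : Continuous (deriv H) := hH'd.continuous
  have hv₁cont : Continuous (deriv ψ₁) := hv₁d.continuous
  have hv₂cont : Continuous (deriv ψ₂) := hv₂d.continuous
  -- constants are positive, and basic structure of the solutions
  have hc₂pos : 0 < c₂ := sol_c_pos hε hfpos hH'lb hNpos hv₂d heq₂ hbot₂ htop₂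
  have hc₁pos : 0 < c₁ := lt_of_lt_of_le hc₂pos hc
  have hf₁pos : ∀ x, 0 < fμ (deriv ψ₁ x) :=
    sol_fμ_pos hε hfpos hH'lb hNpos hv₁d heq₁ hbot₁ htop₁ hc₁pos
  have hf₂pos : ∀ x, 0 < fμ (deriv ψ₂ x) :=
    sol_fμ_pos hε hfpos hH'lb hNpos hv₂d heq₂ hbot₂ htop₂ hc₂pos
  have hd₁pos : ∀ x, 0 < deriv (deriv ψ₁) x :=
    sol_deriv_pos hε hfpos hH'lb hNpos hv₁d heq₁ hbot₁ htop₁ hc₁pos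
  have hd₂pos : ∀ x, 0 < deriv (deriv ψ₂) x :=
    sol_deriv_pos hε hfpos hH'lb hNpos hv₂d heq₂ hbot₂ htop₂ hc₂pos
  have hm₁ : StrictMono (deriv ψ₁) := strictMono_of_deriv_pos hd₁pos
  have hm₂ : StrictMono (deriv ψ₂) := strictMono_of_deriv_pos hd₂pos
  have hr₁ : ∀ x, deriv ψ₁ x ∈ Ioo (0:ℝ) 1 := sol_mem_Ioo hm₁ hbot₁ htop₁
  have hr₂ : ∀ x, deriv ψ₂ x ∈ Ioo (0:ℝ) 1 := sol_mem_Ioo hm₂ hbot₂ htop₂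
  -- θ basic facts
  have hθ'fun : deriv θ = fun x => deriv ψ₁ x - deriv ψ₂ x := by
    funext x
    rw [hθ]
    exact deriv_sub (hψ₁d x) (hψ₂d x)
  have hθcont : Continuous θ := by
    rw [hθ]; exact hψ₁d.continuous.sub hψ₂d.continuous
  have hθ'cont : Continuous (deriv θ) := by
    rw [hθ'fun]; exact hv₁cont.sub hv₂cont
  -- strict monotonicity of deriv H
  have hH'mono : StrictMonoOn (deriv H) Set.univ :=
    hHconv.strictMonoOn_deriv (fun x _ => (hHd x))
  have hH'le : ∀ x y : ℝ, x ≤ y → deriv H x ≤ deriv H y := by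
    intro x y hxy
    rcases eq_or_lt_of_le hxy with h | h
    · rw [h]
    · exact le_of_lt (hH'mono (Set.mem_univ x) (Set.mem_univ y) h)
  -- no zeros of deriv θ strictly below b
  have hSnot : ∀ x, s₀ < x → (x : EReal) < b → deriv θ x ≠ 0 := by
    intro x hx hxb h0
    have hmem : (x : EReal) ∈ Real.toEReal '' {s : ℝ | s₀ < s ∧ deriv θ s = 0} :=
      ⟨x, ⟨hx, h0⟩, rfl⟩
    have : b ≤ (x : EReal) := hb ▸ sInf_le hmem
    exact absurd hxb (not_lt.mpr this)
  by_contra hcon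
  push_neg at hcon
  have hspos : 0 < deriv θ s := lt_of_le_of_ne hcon (Ne.symm (hSnot s hs₀s hsb))
  -- positivity of deriv θ on the whole region via IVT
  have hpos : ∀ x, s₀ < x → (x : EReal) < b → 0 < deriv θ x := by
    intro x hx hxb
    rcases lt_trichotomy (deriv θ x) 0 with h | h | h
    · exfalso
      have hsub : Set.uIcc (deriv θ x) (deriv θ s) ⊆ deriv θ '' Set.uIcc x s :=
        intermediate_value_uIcc hθ'cont.continuousOn
      have h0mem : (0:ℝ) ∈ Set.uIcc (deriv θ x) (deriv θ s) :=
        Set.mem_uIcc.mpr (Or.inl ⟨le_of_lt h, le_of_lt hspos⟩)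
      obtain ⟨y, hy, hy0⟩ := hsub h0mem
      rw [Set.uIcc_eq_union] at hy
      have hy1 : s₀ < y := by
        rcases hy with hy | hy
        · exact lt_of_lt_of_le hx hy.1
        · exact lt_of_lt_of_le hs₀s hy.1
      have hy2 : (y : EReal) < b := by
        rcases hy with hy | hy
        · exact lt_of_le_of_lt (EReal.coe_le_coe_iff.mpr hy.2) hsb
        · exact lt_of_le_of_lt (EReal.coe_le_coe_iff.mpr hy.2) hxb
      exact hSnot y hy1 hy2 hy0
    · exact absurd h (hSnot x hx hxb)
    · exact h
  -- positivity of θ on the region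
  have hθpos : ∀ x, s₀ < x → (x : EReal) < b → 0 < θ x := by
    intro x hx hxb
    have hsm : StrictMonoOn θ (Set.Icc s₀ x) := by
      refine strictMonoOn_of_deriv_pos (convex_Icc _ _) hθcont.continuousOn ?_
      intro y hy
      rw [interior_Icc] at hy
      exact hpos y hy.1 (lt_trans (EReal.coe_lt_coe_iff.mpr hy.2) hxb)
    have := hsm ⟨le_rfl, le_of_lt hx⟩ ⟨le_of_lt hx, le_rfl⟩ hx
    rwa [hs₀] at this
  by_cases hS : {x : ℝ | s₀ < x ∧ deriv θ x = 0}.Nonempty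
  · -- b is finite; let β be its real value
    obtain ⟨s₁, hs₁⟩ := hS
    have hble : b ≤ (s₁ : EReal) := hb ▸ sInf_le ⟨s₁, hs₁, rfl⟩
    have hbta : b ≠ ⊤ := ne_top_of_le_ne_top (EReal.coe_ne_top s₁) hble
    have hbba : b ≠ ⊥ := by
      intro h0
      rw [h0] at hlt
      exact absurd hlt (by simp)
    set β := b.toReal with hβdef
    have hβ : (β : EReal) = b := EReal.coe_toReal hbta hbba
    have hs₀β : s₀ < β := by
      rw [← hβ] at hlt
      exact EReal.coe_lt_coe_iff.mp hlt
    have hsβ : s < β := by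
      rw [← hβ] at hsb
      exact EReal.coe_lt_coe_iff.mp hsb
    have hβle : ∀ x, s₀ < x → deriv θ x = 0 → β ≤ x := by
      intro x hx h0
      have : b ≤ (x : EReal) := hb ▸ sInf_le ⟨x, ⟨hx, h0⟩, rfl⟩
      rw [← hβ] at this
      exact EReal.coe_le_coe_iff.mp this
    -- approximating sequence from the right
    have happrox : ∀ n : ℕ, ∃ x, (s₀ < x ∧ deriv θ x = 0) ∧ β ≤ x ∧ x < β + 1/(n+1) := by
      intro n
      by_contra hcon2
      push_neg at hcon2
      have hββ : ((β + 1/(n+1) : ℝ) : EReal) ≤ b := by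
        rw [hb]
        refine le_sInf ?_
        rintro y ⟨x, hx, rfl⟩
        have hβx := hβle x hx.1 hx.2
        exact EReal.coe_le_coe_iff.mpr (hcon2 x hx hβx)
      rw [← hβ] at hββ
      have := EReal.coe_le_coe_iff.mp hββ
      have hpos1 : (0:ℝ) < 1/(n+1) := by positivity
      linarith
    choose u hu using happrox
    have hutend : Tendsto u atTop (nhds β) := by
      have hle1 : ∀ n : ℕ, β ≤ u n := fun n => (hu n).2.1
      have hle2 : ∀ n : ℕ, u n ≤ β + 1/(n+1) := fun n => le_of_lt (hu n).2.2
      have h1 : Tendsto (fun n : ℕ => β + 1/(n+1 : ℝ)) atTop (nhds β) := by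
        have := tendsto_one_div_add_atTop_nhds_zero_nat (𝕜 := ℝ)
        have h2 := tendsto_const_nhds (x := β) (f := atTop (α := ℕ)) |>.add this
        simpa using h2
      exact tendsto_of_tendsto_of_tendsto_of_le_of_le tendsto_const_nhds h1 hle1
        (fun n => by simpa using hle2 n)
    have hθ'β : deriv θ β = 0 := by
      have h1 : Tendsto (fun n => deriv θ (u n)) atTop (nhds (deriv θ β)) :=
        (hθ'cont.continuousAt.tendsto).comp hutend
      have h2 : (fun n => deriv θ (u n)) = fun _ => (0:ℝ) := funext fun n => (hu n).1.2
      rw [h2] at h1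
      exact tendsto_nhds_unique h1 tendsto_const_nhds
    -- θ is positive at β
    have hθβpos : 0 < θ β := by
      have hsm : StrictMonoOn θ (Set.Icc s₀ β) := by
        refine strictMonoOn_of_deriv_pos (convex_Icc _ _) hθcont.continuousOn ?_
        intro y hy
        rw [interior_Icc] at hy
        exact hpos y hy.1 (by rw [← hβ]; exact EReal.coe_lt_coe_iff.mpr hy.2)
      have := hsm ⟨le_rfl, le_of_lt hs₀β⟩ ⟨le_of_lt hs₀β, le_rfl⟩ hs₀β
      rwa [hs₀] at this
    -- equal first derivatives at β
    have hvv : deriv ψ₁ β = deriv ψ₂ β := by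
      have h1 : deriv ψ₁ β - deriv ψ₂ β = 0 := by
        rw [hθ'fun] at hθ'β; exact hθ'β
      linarith
    -- weights
    set w₁ := β * deriv ψ₁ β - ψ₁ β with hw₁def
    set w₂ := β * deriv ψ₂ β - ψ₂ β with hw₂def
    have hθβ : θ β = ψ₁ β - ψ₂ β := by rw [hθ]
    have hw : w₁ < w₂ := by
      rw [hw₁def, hw₂def, hvv]
      have : ψ₂ β < ψ₁ β := by rw [hθβ] at hθβpos; linarith
      linarith
    have hE : deriv H w₁ < deriv H w₂ := hH'mono (Set.mem_univ _) (Set.mem_univ _) hw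
    have hE₁pos : 0 < deriv H w₁ := lt_trans hε (hH'lb w₁)
    have hE₂pos : 0 < deriv H w₂ := lt_trans hε (hH'lb w₂)
    have hFβ : 0 < fμ (deriv ψ₁ β) := hf₁pos β
    have heqβ₁ : fμ (deriv ψ₁ β) * deriv (deriv ψ₁) β * deriv H w₁ = c₁ * N β := by
      rw [hw₁def]; exact heq₁ β
    have hfeq : fμ (deriv ψ₁ β) = fμ (deriv ψ₂ β) := by rw [hvv]
    have heqβ₂ : fμ (deriv ψ₁ β) * deriv (deriv ψ₂) β * deriv H w₂ = c₂ * N β := by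
      rw [hfeq, hw₂def]; exact heq₂ β
    -- strict inequality of second derivatives
    have hA : deriv (deriv ψ₂) β < deriv (deriv ψ₁) β := by
      have hNβ := hNpos β
      have key : c₂ * N β * deriv H w₁ < c₁ * N β * deriv H w₂ := by
        have h1 : c₂ * N β * deriv H w₁ < c₂ * N β * deriv H w₂ :=
          mul_lt_mul_of_pos_left hE (mul_pos hc₂pos hNβ)
        have h2 : c₂ * N β * deriv H w₂ ≤ c₁ * N β * deriv H w₂ := by
          have := mul_le_mul_of_nonneg_right
            (mul_le_mul_of_nonneg_right hc (le_of_lt hNβ)) (le_of_lt hE₂pos)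
          linarith [this]
        linarith
      rw [← heqβ₁, ← heqβ₂] at key
      -- key : (F * A₂ * E₂) * E₁ < (F * A₁ * E₁) * E₂
      have hEE : 0 < deriv H w₁ * deriv H w₂ := mul_pos hE₁pos hE₂pos
      have hkey2 : deriv (deriv ψ₂) β * (fμ (deriv ψ₁ β) * (deriv H w₁ * deriv H w₂))
          < deriv (deriv ψ₁) β * (fμ (deriv ψ₁ β) * (deriv H w₁ * deriv H w₂)) := by
        linear_combination key
      exact lt_of_mul_lt_mul_right hkey2 (le_of_lt (mul_pos hFβ hEE))
    -- contradiction via left slopes of deriv θ at β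
    have hderβ : HasDerivAt (deriv θ) (deriv (deriv ψ₁) β - deriv (deriv ψ₂) β) β := by
      rw [hθ'fun]
      exact ((hv₁d β).hasDerivAt).sub ((hv₂d β).hasDerivAt)
    have hslope := hasDerivAt_iff_tendsto_slope.mp hderβ
    have h2 : Tendsto (slope (deriv θ) β) (nhdsWithin β (Set.Iio β))
        (nhds (deriv (deriv ψ₁) β - deriv (deriv ψ₂) β)) :=
      hslope.mono_left (nhdsWithin_mono _ (fun x hx => ne_of_lt hx))
    have hle0 : deriv (deriv ψ₁) β - deriv (deriv ψ₂) β ≤ 0 := by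
      refine le_of_tendsto h2 ?_
      filter_upwards [Ioo_mem_nhdsLT_of_mem (⟨hs₀β, le_rfl⟩ : β ∈ Set.Ioc s₀ β)] with x hx
      have hxpos : 0 < deriv θ x := hpos x hx.1 (by rw [← hβ]; exact EReal.coe_lt_coe_iff.mpr hx.2)
      have hs : slope (deriv θ) β x = (deriv θ x - 0) / (x - β) := by
        rw [slope_def_field, hθ'β]
      rw [hs]
      exact le_of_lt (div_neg_of_pos_of_neg (by linarith) (by linarith [hx.2]))
    linarith
  · -- b is infinite: deriv θ > 0 on all of (s₀, ∞); derive a contradiction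
    have hne : ∀ x, s₀ < x → deriv θ x ≠ 0 := by
      intro x hx h0
      exact hS ⟨x, hx, h0⟩
    have hpos' : ∀ x, s₀ < x → 0 < deriv θ x := by
      intro x hx
      rcases lt_trichotomy (deriv θ x) 0 with h | h | h
      · exfalso
        have hsub : Set.uIcc (deriv θ x) (deriv θ s) ⊆ deriv θ '' Set.uIcc x s :=
          intermediate_value_uIcc hθ'cont.continuousOn
        have h0mem : (0:ℝ) ∈ Set.uIcc (deriv θ x) (deriv θ s) :=
          Set.mem_uIcc.mpr (Or.inl ⟨le_of_lt h, le_of_lt hspos⟩)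
        obtain ⟨y, hy, hy0⟩ := hsub h0mem
        rw [Set.uIcc_eq_union] at hy
        have hy1 : s₀ < y := by
          rcases hy with hy | hy
          · exact lt_of_lt_of_le hx hy.1
          · exact lt_of_lt_of_le hs₀s hy.1
        exact hne y hy1 hy0
      · exact absurd h (hne x hx)
      · exact h
    have hθpos' : ∀ x, s₀ < x → 0 < θ x := by
      intro x hx
      have hsm : StrictMonoOn θ (Set.Icc s₀ x) := by
        refine strictMonoOn_of_deriv_pos (convex_Icc _ _) hθcont.continuousOn ?_
        intro y hy
        rw [interior_Icc] at hy
        exact hpos' y hy.1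
      have := hsm ⟨le_rfl, le_of_lt hx⟩ ⟨le_of_lt hx, le_rfl⟩ hx
      rwa [hs₀] at this
    have hv₁₂ : ∀ x, s₀ < x → deriv ψ₂ x < deriv ψ₁ x := by
      intro x hx
      have h3 := hpos' x hx
      rw [hθ'fun] at h3
      have h4 : 0 < deriv ψ₁ x - deriv ψ₂ x := h3
      linarith
    -- inverse functions
    obtain ⟨g₁, hg₁cont, hg₁⟩ := exists_inverse hm₁ hv₁cont hr₁
      (fun q hq => sol_surj hv₁cont hbot₁ htop₁ hq)
    obtain ⟨g₂, hg₂cont, hg₂⟩ := exists_inverse hm₂ hv₂cont hr₂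
      (fun q hq => sol_surj hv₂cont hbot₂ htop₂ hq)
    have hg₁v : ∀ x, g₁ (deriv ψ₁ x) = x := fun x => hm₁.injective (hg₁ _ (hr₁ x))
    have hg₂v : ∀ x, g₂ (deriv ψ₂ x) = x := fun x => hm₂.injective (hg₂ _ (hr₂ x))
    set t := s₀ + 1 with htdef
    have hts₀ : s₀ < t := by rw [htdef]; linarith
    set p := deriv ψ₁ t with hpdef
    have hp : p ∈ Set.Ioo (0:ℝ) 1 := hr₁ t
    set t₂ := g₂ p with ht₂def
    have hv₂t₂ : deriv ψ₂ t₂ = p := hg₂ p hp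
    have htt₂ : t < t₂ := by
      have h1 : deriv ψ₂ t < deriv ψ₂ t₂ := by
        rw [hv₂t₂, hpdef]
        exact hv₁₂ t hts₀
      exact hm₂.lt_iff_lt.mp h1
    -- the comparison integrands on (0,1)
    obtain ⟨F₁, hF₁def⟩ : ∃ F : ℝ → ℝ, F = fun q => fμ q * deriv H (q * g₁ q - ψ₁ (g₁ q)) :=
      ⟨_, rfl⟩
    obtain ⟨F₂, hF₂def⟩ : ∃ F : ℝ → ℝ, F = fun q => fμ q * deriv H (q * g₂ q - ψ₂ (g₂ q)) :=
      ⟨_, rfl⟩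
    have hF₁contOn : ContinuousOn F₁ (Set.Ioo (0:ℝ) 1) := by
      rw [hF₁def]
      refine ContinuousOn.mul (hfC1.continuousOn.mono Set.Ioo_subset_Icc_self) ?_
      refine hH'cont.comp_continuousOn ?_
      exact (continuousOn_id.mul hg₁cont).sub (hψ₁d.continuous.comp_continuousOn hg₁cont)
    have hF₂contOn : ContinuousOn F₂ (Set.Ioo (0:ℝ) 1) := by
      rw [hF₂def]
      refine ContinuousOn.mul (hfC1.continuousOn.mono Set.Ioo_subset_Icc_self) ?_
      refine hH'cont.comp_continuousOn ?_
      exact (continuousOn_id.mul hg₂cont).sub (hψ₂d.continuous.comp_continuousOn hg₂cont)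
    -- the main comparison for each X > t
    have hchain : ∀ X, t < X →
        c₁ * ∫ x in t..X, N x ≤ c₂ * ∫ x in Set.Ioi t₂, N x := by
      intro X hX
      set V := deriv ψ₁ X with hVdef
      have hpV : p < V := hm₁ hX
      have hV : V ∈ Set.Ioo (0:ℝ) 1 := hr₁ X
      set Y := g₂ V with hYdef
      have hv₂Y : deriv ψ₂ Y = V := hg₂ V hV
      have ht₂Y : t₂ < Y := by
        have h1 : deriv ψ₂ t₂ < deriv ψ₂ Y := by rw [hv₂t₂, hv₂Y]; exact hpV
        exact hm₂.lt_iff_lt.mp h1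
      have hIccIoo : Set.Icc p V ⊆ Set.Ioo (0:ℝ) 1 :=
        fun q hq => ⟨lt_of_lt_of_le hp.1 hq.1, lt_of_le_of_lt hq.2 hV.2⟩
      -- substitution for ψ₁
      have himg₁ : (deriv ψ₁) '' (Set.uIcc t X) ⊆ Set.Ioo (0:ℝ) 1 := by
        rintro y ⟨x, -, rfl⟩; exact hr₁ x
      have hsub₁ : ∫ x in t..X, (deriv (deriv ψ₁) x) • (F₁ ∘ (deriv ψ₁)) x
          = ∫ q in (deriv ψ₁ t)..(deriv ψ₁ X), F₁ q :=
        intervalIntegral.integral_comp_smul_deriv' (fun x _ => (hv₁d x).hasDerivAt)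
          hv₁'cont.continuousOn (hF₁contOn.mono himg₁)
      have hlhs₁ : ∀ x ∈ Set.uIcc t X, (deriv (deriv ψ₁) x) • ((F₁ ∘ (deriv ψ₁)) x) = c₁ * N x := by
        intro x _
        have h1 : (F₁ ∘ (deriv ψ₁)) x
            = fμ (deriv ψ₁ x) * deriv H (x * deriv ψ₁ x - ψ₁ x) := by
          simp only [hF₁def, Function.comp_apply]
          rw [hg₁v x, mul_comm (deriv ψ₁ x) x]
        rw [smul_eq_mul, h1, ← heq₁ x]
        ring
      have heqint₁ : ∫ x in t..X, c₁ * N x = ∫ q in p..V, F₁ q := by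
        rw [hpdef, hVdef, ← hsub₁]
        exact (intervalIntegral.integral_congr hlhs₁).symm
      -- substitution for ψ₂
      have himg₂ : (deriv ψ₂) '' (Set.uIcc t₂ Y) ⊆ Set.Ioo (0:ℝ) 1 := by
        rintro y ⟨x, -, rfl⟩; exact hr₂ x
      have hsub₂ : ∫ x in t₂..Y, (deriv (deriv ψ₂) x) • (F₂ ∘ (deriv ψ₂)) x
          = ∫ q in (deriv ψ₂ t₂)..(deriv ψ₂ Y), F₂ q :=
        intervalIntegral.integral_comp_smul_deriv' (fun x _ => (hv₂d x).hasDerivAt)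
          hv₂'cont.continuousOn (hF₂contOn.mono himg₂)
      have hlhs₂ : ∀ x ∈ Set.uIcc t₂ Y, (deriv (deriv ψ₂) x) • ((F₂ ∘ (deriv ψ₂)) x) = c₂ * N x := by
        intro x _
        have h1 : (F₂ ∘ (deriv ψ₂)) x
            = fμ (deriv ψ₂ x) * deriv H (x * deriv ψ₂ x - ψ₂ x) := by
          simp only [hF₂def, Function.comp_apply]
          rw [hg₂v x, mul_comm (deriv ψ₂ x) x]
        rw [smul_eq_mul, h1, ← heq₂ x]
        ring
      have heqint₂ : ∫ x in t₂..Y, c₂ * N x = ∫ q in p..V, F₂ q := by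
        rw [show p = deriv ψ₂ t₂ from hv₂t₂.symm, show V = deriv ψ₂ Y from hv₂Y.symm, ← hsub₂]
        exact (intervalIntegral.integral_congr hlhs₂).symm
      -- pointwise comparison F₁ ≤ F₂ on [p, V]
      have hFle : ∀ q ∈ Set.Icc p V, F₁ q ≤ F₂ q := by
        intro q hq
        simp only [hF₁def, hF₂def]
        have hqIoo : q ∈ Set.Ioo (0:ℝ) 1 := hIccIoo hq
        have hva : deriv ψ₁ (g₁ q) = q := hg₁ q hqIoo
        have hva₂ : deriv ψ₂ (g₂ q) = q := hg₂ q hqIoo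
        have hta : t ≤ g₁ q := by
          have h1 : deriv ψ₁ t ≤ deriv ψ₁ (g₁ q) := by rw [hva]; exact hq.1
          exact hm₁.le_iff_le.mp h1
        have hs₀a : s₀ < g₁ q := lt_of_lt_of_le hts₀ hta
        have haa₂ : g₁ q < g₂ q := by
          have h1 : deriv ψ₂ (g₁ q) < deriv ψ₂ (g₂ q) := by
            rw [hva₂]
            calc deriv ψ₂ (g₁ q) < deriv ψ₁ (g₁ q) := hv₁₂ (g₁ q) hs₀a
              _ = q := hva
          exact hm₂.lt_iff_lt.mp h1
        obtain ⟨ξ, hξ, hξeq⟩ := exists_hasDerivAt_eq_slope ψ₂ (deriv ψ₂) haa₂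
          hψ₂d.continuous.continuousOn (fun x _ => (hψ₂d x).hasDerivAt)
        have hξle : deriv ψ₂ ξ ≤ q := by
          rw [← hva₂]
          exact le_of_lt (hm₂ hξ.2)
        have hgne : g₂ q - g₁ q ≠ 0 := ne_of_gt (sub_pos.mpr haa₂)
        have hψ₂diff : ψ₂ (g₂ q) - ψ₂ (g₁ q) = deriv ψ₂ ξ * (g₂ q - g₁ q) := by
          rw [hξeq, div_mul_cancel₀ _ hgne]
        have hθa : 0 < θ (g₁ q) := hθpos' (g₁ q) hs₀a
        have hθa' : θ (g₁ q) = ψ₁ (g₁ q) - ψ₂ (g₁ q) := by rw [hθ]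
        have harg : q * g₁ q - ψ₁ (g₁ q) ≤ q * g₂ q - ψ₂ (g₂ q) := by
          have hmul : deriv ψ₂ ξ * (g₂ q - g₁ q) ≤ q * (g₂ q - g₁ q) :=
            mul_le_mul_of_nonneg_right hξle (le_of_lt (sub_pos.mpr haa₂))
          nlinarith [hψ₂diff, hθa, hθa']
        have hH'q : deriv H (q * g₁ q - ψ₁ (g₁ q)) ≤ deriv H (q * g₂ q - ψ₂ (g₂ q)) :=
          hH'le _ _ harg
        have hfq : 0 ≤ fμ q := le_of_lt (hfpos q (Set.Ioo_subset_Icc_self hqIoo))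
        exact mul_le_mul_of_nonneg_left hH'q hfq
      have hFmono : ∫ q in p..V, F₁ q ≤ ∫ q in p..V, F₂ q := by
        refine intervalIntegral.integral_mono_on (le_of_lt hpV) ?_ ?_ hFle
        · refine (hF₁contOn.mono ?_).intervalIntegrable
          rw [Set.uIcc_of_le (le_of_lt hpV)]
          exact hIccIoo
        · refine (hF₂contOn.mono ?_).intervalIntegrable
          rw [Set.uIcc_of_le (le_of_lt hpV)]
          exact hIccIoo
      -- upper bound by the tail integral
      have htail : ∫ x in t₂..Y, c₂ * N x ≤ c₂ * ∫ x in Set.Ioi t₂, N x := by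
        rw [intervalIntegral.integral_const_mul]
        refine mul_le_mul_of_nonneg_left ?_ (le_of_lt hc₂pos)
        rw [intervalIntegral.integral_of_le (le_of_lt ht₂Y)]
        refine MeasureTheory.setIntegral_mono_set hNint.integrableOn ?_ ?_
        · exact Filter.Eventually.of_forall (fun x => le_of_lt (hNpos x))
        · exact Filter.Eventually.of_forall Set.Ioc_subset_Ioi_self
      calc c₁ * ∫ x in t..X, N x = ∫ x in t..X, c₁ * N x := by
            rw [intervalIntegral.integral_const_mul]
        _ = ∫ q in p..V, F₁ q := heqint₁
        _ ≤ ∫ q in p..V, F₂ q := hFmono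
        _ = ∫ x in t₂..Y, c₂ * N x := heqint₂.symm
        _ ≤ c₂ * ∫ x in Set.Ioi t₂, N x := htail
    -- pass to the limit X → ∞
    have hlim : Tendsto (fun X => c₁ * ∫ x in t..X, N x) atTop
        (nhds (c₁ * ∫ x in Set.Ioi t, N x)) :=
      (MeasureTheory.intervalIntegral_tendsto_integral_Ioi t hNint.integrableOn tendsto_id).const_mul c₁
    have hfinal : c₁ * ∫ x in Set.Ioi t, N x ≤ c₂ * ∫ x in Set.Ioi t₂, N x := by
      refine le_of_tendsto hlim ?_
      filter_upwards [eventually_gt_atTop t] with X hX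
      exact hchain X hX
    -- but the left integral is strictly bigger
    have htail_nonneg : 0 ≤ ∫ x in Set.Ioi t₂, N x :=
      MeasureTheory.setIntegral_nonneg measurableSet_Ioi (fun x _ => le_of_lt (hNpos x))
    have hsplit : (∫ x in Set.Ioc t t₂, N x) + ∫ x in Set.Ioi t₂, N x = ∫ x in Set.Ioi t, N x := by
      rw [← MeasureTheory.setIntegral_union (Set.Ioc_disjoint_Ioi le_rfl) measurableSet_Ioi
        (hNint.integrableOn) (hNint.integrableOn), Set.Ioc_union_Ioi_eq_Ioi (le_of_lt htt₂)]
    have hmid : 0 < ∫ x in Set.Ioc t t₂, N x := by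
      rw [← intervalIntegral.integral_of_le (le_of_lt htt₂)]
      refine intervalIntegral.intervalIntegral_pos_of_pos_on
        (hNcont.continuousOn.intervalIntegrable) (fun x _ => hNpos x) htt₂
    have hstrict : c₂ * ∫ x in Set.Ioi t₂, N x < c₁ * ∫ x in Set.Ioi t, N x := by
      have h1 : c₂ * ∫ x in Set.Ioi t₂, N x ≤ c₁ * ∫ x in Set.Ioi t₂, N x :=
        mul_le_mul_of_nonneg_right hc htail_nonneg
      have h2 : c₁ * ∫ x in Set.Ioi t₂, N x < c₁ * ∫ x in Set.Ioi t, N x := by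
        refine mul_lt_mul_of_pos_left ?_ hc₁pos
        linarith [hsplit, hmid]
      linarith
    linarith
end
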